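/- arXiv:2605.24627 — 5 statements merged into one kernel-verified Lean document; each statement's English description precedes it below -/
import Mathlib

section
/- (Local expansion) As (δ,δ',ψ,w,w') → 0 within the domain δ,δ' ∈ [0,1], w² ≤ δ, (w')² ≤ δ', the distance deficit satisfies 2 − ‖x(θ,δ,w) − x(θ+π+ψ,δ',w')‖ = (δ+δ')/2 + ψ²/4 − (a²/4)(w−w')² + r, where the remainder r = o(δ + δ' + ψ² + w² + (w')²) uniformly in θ ∈ [0,2π]. -/
open Real

noncomputable def pt (a θ δ w : ℝ) : EuclideanSpace ℝ (Fin 3) :=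
  (WithLp.equiv 2 (Fin 3 → ℝ)).symm
    ![Real.sqrt (1-δ) * Real.cos θ, Real.sqrt (1-δ) * Real.sin θ, a*w]

lemma norm_pt_sub (a θ δ δ' ψ w w' : ℝ) (hδ : δ ≤ 1) (hδ' : δ' ≤ 1) :
    ‖pt a θ δ w - pt a (θ + π + ψ) δ' w'‖ =
      Real.sqrt (2 - δ - δ' + 2 * Real.sqrt (1-δ) * Real.sqrt (1-δ') * Real.cos ψ
        + a^2 * (w - w')^2) := by
  rw [EuclideanSpace.norm_eq]
  congr 1
  have h1 : Real.sqrt (1-δ) ^ 2 = 1 - δ := Real.sq_sqrt (by linarith)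
  have h2 : Real.sqrt (1-δ') ^ 2 = 1 - δ' := Real.sq_sqrt (by linarith)
  have hc : Real.cos (θ + π + ψ) = -(Real.cos θ * Real.cos ψ - Real.sin θ * Real.sin ψ) := by
    rw [show θ + π + ψ = (θ + ψ) + π by ring, Real.cos_add_pi, Real.cos_add]
  have hs : Real.sin (θ + π + ψ) = -(Real.sin θ * Real.cos ψ + Real.cos θ * Real.sin ψ) := by
    rw [show θ + π + ψ = (θ + ψ) + π by ring, Real.sin_add_pi, Real.sin_add]
  have p1 := Real.sin_sq_add_cos_sq θ
  have p2 := Real.sin_sq_add_cos_sq ψ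
  simp only [pt]
  rw [show ((WithLp.equiv 2 (Fin 3 → ℝ)).symm ![Real.sqrt (1-δ) * Real.cos θ, Real.sqrt (1-δ) * Real.sin θ, a*w] - (WithLp.equiv 2 (Fin 3 → ℝ)).symm ![Real.sqrt (1-δ') * Real.cos (θ+π+ψ), Real.sqrt (1-δ') * Real.sin (θ+π+ψ), a*w'] : EuclideanSpace ℝ (Fin 3)) = (WithLp.equiv 2 (Fin 3 → ℝ)).symm (![Real.sqrt (1-δ) * Real.cos θ, Real.sqrt (1-δ) * Real.sin θ, a*w] - ![Real.sqrt (1-δ') * Real.cos (θ+π+ψ), Real.sqrt (1-δ') * Real.sin (θ+π+ψ), a*w']) from by rfl]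
  rw [Fin.sum_univ_three]
  simp only [WithLp.equiv_symm_apply, WithLp.ofLp_toLp, Pi.sub_apply, Matrix.cons_val_zero,
    Matrix.cons_val_one, Matrix.head_cons, Matrix.cons_val_two, Matrix.tail_cons,
    Real.norm_eq_abs, sq_abs]
  rw [hc, hs]
  linear_combination (Real.sqrt (1-δ)^2 + Real.sqrt (1-δ')^2 * (Real.sin ψ^2 + Real.cos ψ^2) + 2*Real.sqrt (1-δ)*Real.sqrt (1-δ')*Real.cos ψ) * p1 + Real.sqrt (1-δ')^2 * p2 + h1 + h2

lemma sq_aux (x : ℝ) (h : x^2 ≤ 1) : |x| ≤ 1 := by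
  nlinarith [sq_abs x, abs_nonneg x]
lemma Pbound (δ δ' s P : ℝ) (h0 : 0 ≤ δ) (h1 : 0 ≤ δ') (hus : δ + δ' ≤ s)
    (hs4 : s ≤ 1/4) (hP0 : 0 ≤ P) (hP2 : P^2 = (1-δ)*(1-δ')) :
    0 ≤ 1 - (δ+δ')/2 - P ∧ 1 - (δ+δ')/2 - P ≤ s^2/2 := by
  have hs0 : 0 ≤ s := by linarith
  constructor
  · nlinarith [sq_nonneg (δ - δ'), (by linarith : (0:ℝ) < P + (1 - (δ+δ')/2))]
  · nlinarith [sq_nonneg (δ - δ'), (by linarith : (7:ℝ)/8 ≤ 1 - (δ+δ')/2 + P),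
      mul_nonneg h0 h1, mul_nonneg (by linarith : (0:ℝ) ≤ s - (δ+δ')) (by linarith : (0:ℝ) ≤ s + (δ+δ'))]

lemma Ebound (P c u q s : ℝ) (hu0 : 0 ≤ u) (hus : u ≤ s) (hq0 : 0 ≤ q) (hqs : q ≤ s)
    (hs4 : s ≤ 1/4) (he1l : 0 ≤ 1 - u/2 - P) (he1u : 1 - u/2 - P ≤ s^2/2)
    (hcl : -(5/96*s^2) ≤ c - (1 - q/2)) (hcu : c - (1 - q/2) ≤ 5/96*s^2)
    (hc1 : c ≤ 1) (hcm1 : -1 ≤ c) :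
    |2*P*c - 2 + u + q| ≤ 2*s^2 := by
  have hs0 : 0 ≤ s := by linarith
  have huq : u*q ≤ s*s := mul_le_mul hus hqs hq0 hs0
  have h1 : 0 ≤ 1 - u/2 := by linarith
  have p1 := mul_nonneg he1l (by linarith : (0:ℝ) ≤ 1 - c)
  have p2 := mul_nonneg he1l (by linarith : (0:ℝ) ≤ 1 + c)
  have p3 := mul_nonneg h1 (by linarith : (0:ℝ) ≤ 5/96*s^2 - (c - (1 - q/2)))
  have p4 := mul_nonneg h1 (by linarith : (0:ℝ) ≤ (c - (1 - q/2)) + 5/96*s^2)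
  have p5 := mul_nonneg hu0 (by linarith : (0:ℝ) ≤ 5/96*s^2 - (c - (1 - q/2)))
  have p6 := mul_nonneg hu0 (by linarith : (0:ℝ) ≤ (c - (1 - q/2)) + 5/96*s^2)
  have hss : s*s ≤ s/4 := by nlinarith
  rw [abs_le]
  constructor <;> nlinarith [p1, p2, p3, p4, p5, p6, huq, hss, mul_nonneg (mul_nonneg he1l hs0) hs0]

lemma Dbound (a w w' δ δ' ψ s : ℝ) (ha0 : 0 < a) (ha1 : a < 1)
    (hw : w^2 ≤ δ) (hw' : w'^2 ≤ δ') (hus : δ + δ' + ψ^2 ≤ s) :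
    0 ≤ 2*(δ+δ') + ψ^2 - a^2*(w-w')^2 ∧ 2*(δ+δ') + ψ^2 - a^2*(w-w')^2 ≤ 2*s := by
  have h1 : (0:ℝ) ≤ 1 - a^2 := by nlinarith
  constructor
  · nlinarith [sq_nonneg (w+w'), sq_nonneg ψ, mul_nonneg h1 (sq_nonneg (w-w'))]
  · nlinarith [mul_nonneg (mul_nonneg ha0.le ha0.le) (sq_nonneg (w-w')), sq_nonneg ψ,
      mul_nonneg (sq_nonneg a) (sq_nonneg (w-w'))]

lemma Rfinal (D E R s : ℝ) (hD0 : 0 ≤ D) (hDu : D ≤ 2*s) (hEl : -(2*s^2) ≤ E)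
    (hEu : E ≤ 2*s^2) (hs0 : 0 ≤ s) (hs4 : s ≤ 1/4) (hR0 : 0 ≤ R)
    (hR2 : R^2 = 4 - D + E) : |2 - R - D/4| ≤ s^2 := by
  have hss : s^2 ≤ s/4 := by nlinarith
  have hR1 : 1 ≤ R := by nlinarith [(by linarith : (0:ℝ) ≤ 1 + R)]
  have hR3 : R ≤ 3 := by nlinarith [(by linarith : (0:ℝ) ≤ 3 + R)]
  have h2Ru : 2 - R ≤ s := by nlinarith [(by linarith : (3:ℝ) ≤ 2 + R)]
  have h2Rl : -s ≤ 2 - R := by nlinarith [(by linarith : (3:ℝ) ≤ 2 + R)]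
  have key : (2 - R - D/4) * (4*(2+R)) = D*(2-R) - 4*E := by linear_combination (-4:ℝ) * hR2
  have hA : D*(2-R) ≤ 2*s^2 := by
    nlinarith [mul_nonneg hD0 (by linarith : (0:ℝ) ≤ s - (2-R)),
      mul_nonneg (by linarith : (0:ℝ) ≤ 2*s - D) hs0]
  have hB : -(2*s^2) ≤ D*(2-R) := by
    nlinarith [mul_nonneg hD0 (by linarith : (0:ℝ) ≤ (2-R) + s),
      mul_nonneg (by linarith : (0:ℝ) ≤ 2*s - D) hs0]
  rw [abs_le]
  constructor
  · nlinarith [key, hB, hEu, sq_nonneg s]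
  · nlinarith [key, hA, hEl, sq_nonneg s]

lemma key_est (a δ δ' ψ w w' s Q R P : ℝ)
    (hδ0 : 0 ≤ δ) (hδ'0 : 0 ≤ δ') (hw : w^2 ≤ δ) (hw' : w'^2 ≤ δ')
    (ha0 : 0 < a) (ha1 : a < 1)
    (hsdef : s = δ + δ' + ψ^2 + w^2 + w'^2) (hs4 : s ≤ 1/4)
    (hP0 : 0 ≤ P) (hP2 : P^2 = (1-δ)*(1-δ'))
    (hQdef : Q = 2 - δ - δ' + 2*P*Real.cos ψ + a^2*(w-w')^2)
    (hR0 : 0 ≤ R) (hR2 : R^2 = Q) :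
    |2 - R - ((δ+δ')/2 + ψ^2/4 - a^2/4*(w-w')^2)| ≤ s^2 := by
  have hw20 := sq_nonneg w
  have hw'20 := sq_nonneg w'
  have hψ20 := sq_nonneg ψ
  have hψs : ψ^2 ≤ s := by linarith
  have hus : δ + δ' ≤ s := by linarith
  have hs0 : 0 ≤ s := by linarith
  obtain ⟨hP1, hP3⟩ := Pbound δ δ' s P hδ0 hδ'0 hus hs4 hP0 hP2
  -- cosine bound
  have hψ1 : |ψ| ≤ 1 := sq_aux ψ (by linarith)
  have hcb := Real.cos_bound hψ1
  have habs4 : |ψ|^4 = ψ^2*ψ^2 := by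
    rw [show (4:ℕ) = 2*2 from rfl, pow_mul, sq_abs]; ring
  have hψ4 : |ψ|^4 ≤ s^2 := by
    rw [habs4]
    nlinarith [mul_nonneg (by linarith : (0:ℝ) ≤ s - ψ^2) (by linarith : (0:ℝ) ≤ s + ψ^2)]
  have hcos2 : |Real.cos ψ - (1 - ψ^2/2)| ≤ 5/96 * s^2 := by
    calc |Real.cos ψ - (1 - ψ^2/2)| ≤ |ψ|^4 * (5/96) := hcb
      _ ≤ 5/96 * s^2 := by linarith
  obtain ⟨hc2l, hc2u⟩ := abs_le.mp hcos2
  -- E bound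
  have hE := Ebound P (Real.cos ψ) (δ+δ') (ψ^2) s (by linarith) hus hψ20 hψs hs4
    hP1 hP3 hc2l hc2u (Real.cos_le_one ψ) (Real.neg_one_le_cos ψ)
  obtain ⟨hEl, hEu⟩ := abs_le.mp hE
  obtain ⟨hD0, hDu⟩ := Dbound a w w' δ δ' ψ s ha0 ha1 hw hw' (by linarith)
  have hR2' : R^2 = 4 - (2*(δ+δ') + ψ^2 - a^2*(w-w')^2) + (2*P*Real.cos ψ - 2 + (δ+δ') + ψ^2) := by
    rw [hR2, hQdef]; ring
  have hfin := Rfinal (2*(δ+δ') + ψ^2 - a^2*(w-w')^2) (2*P*Real.cos ψ - 2 + (δ+δ') + ψ^2)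
    R s hD0 hDu hEl hEu hs0 hs4 hR0 hR2'
  have : 2 - R - ((δ+δ')/2 + ψ^2/4 - a^2/4*(w-w')^2)
      = 2 - R - (2*(δ+δ') + ψ^2 - a^2*(w-w')^2)/4 := by ring
  rw [this]
  exact hfin

/-- Local expansion: `2 - ‖x(θ,δ,w) - x(θ+π+ψ,δ',w')‖` equals
`(δ+δ')/2 + ψ²/4 - (a²/4)(w-w')²` up to a remainder which is
`o(δ+δ'+ψ²+w²+w'²)`, uniformly in `θ ∈ [0,2π]`. -/
theorem stmt6 (a : ℝ) (ha : 0 < a) (ha1 : a < 1) :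
    ∀ ε > (0:ℝ), ∃ η > (0:ℝ), ∀ θ ∈ Set.Icc (0:ℝ) (2*π), ∀ δ δ' ψ w w' : ℝ,
      δ ∈ Set.Icc (0:ℝ) 1 → δ' ∈ Set.Icc (0:ℝ) 1 → w ^ 2 ≤ δ → w' ^ 2 ≤ δ' →
      δ + δ' + ψ ^ 2 + w ^ 2 + w' ^ 2 < η →
      |(2 - ‖pt a θ δ w - pt a (θ + π + ψ) δ' w'‖) -
          ((δ + δ') / 2 + ψ ^ 2 / 4 - a ^ 2 / 4 * (w - w') ^ 2)| ≤
        ε * (δ + δ' + ψ ^ 2 + w ^ 2 + w' ^ 2) := by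
  intro ε hε
  refine ⟨min ε (1/4), by positivity, ?_⟩
  intro θ hθ δ δ' ψ w w' hδ hδ' hw hw' hsη
  obtain ⟨hδ0, hδ1⟩ := hδ
  obtain ⟨hδ'0, hδ'1⟩ := hδ'
  set s : ℝ := δ + δ' + ψ ^ 2 + w ^ 2 + w' ^ 2 with hsdef
  have hsε : s < ε := lt_of_lt_of_le hsη (min_le_left _ _)
  have hs4 : s ≤ 1/4 := le_of_lt (lt_of_lt_of_le hsη (min_le_right _ _))
  have hs0 : 0 ≤ s := by
    have := sq_nonneg ψ; have := sq_nonneg w; have := sq_nonneg w'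
    rw [hsdef]; linarith
  rw [norm_pt_sub a θ δ δ' ψ w w' hδ1 hδ'1]
  have hc0 : 0 ≤ Real.sqrt (1-δ) := Real.sqrt_nonneg _
  have hc'0 : 0 ≤ Real.sqrt (1-δ') := Real.sqrt_nonneg _
  have hc2 : Real.sqrt (1-δ) ^ 2 = 1 - δ := Real.sq_sqrt (by linarith)
  have hc'2 : Real.sqrt (1-δ') ^ 2 = 1 - δ' := Real.sq_sqrt (by linarith)
  have hP2 : (Real.sqrt (1-δ) * Real.sqrt (1-δ'))^2 = (1-δ)*(1-δ') := by
    rw [mul_pow, hc2, hc'2]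
  have hQ0 : 0 ≤ 2 - δ - δ' + 2 * Real.sqrt (1-δ) * Real.sqrt (1-δ') * Real.cos ψ
      + a^2 * (w - w')^2 := by
    nlinarith [sq_nonneg (Real.sqrt (1-δ) - Real.sqrt (1-δ')),
      mul_nonneg (mul_nonneg hc0 hc'0) (by linarith [Real.neg_one_le_cos ψ] : (0:ℝ) ≤ 1 + Real.cos ψ),
      mul_nonneg (sq_nonneg a) (sq_nonneg (w - w'))]
  have hkey := key_est a δ δ' ψ w w' s
    (2 - δ - δ' + 2 * Real.sqrt (1-δ) * Real.sqrt (1-δ') * Real.cos ψ + a^2 * (w - w')^2)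
    (Real.sqrt (2 - δ - δ' + 2 * Real.sqrt (1-δ) * Real.sqrt (1-δ') * Real.cos ψ + a^2 * (w - w')^2))
    (Real.sqrt (1-δ) * Real.sqrt (1-δ'))
    hδ0 hδ'0 hw hw' ha ha1 hsdef hs4 (mul_nonneg hc0 hc'0) hP2 (by ring)
    (Real.sqrt_nonneg _) (Real.sq_sqrt hQ0)
  calc |2 - Real.sqrt (2 - δ - δ' + 2 * Real.sqrt (1-δ) * Real.sqrt (1-δ') * Real.cos ψ + a^2 * (w - w')^2)
        - ((δ + δ') / 2 + ψ ^ 2 / 4 - a ^ 2 / 4 * (w - w') ^ 2)| ≤ s^2 := hkey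
    _ ≤ ε * s := by nlinarith
end

section
/- There exists a constant γ > 0, depending only on a ∈ (0,1), such that for all δ, δ' ∈ [0,1] sufficiently small and all w, w' with w² ≤ δ, (w')² ≤ δ', and all angles θ, θ', the points x = x(θ,δ,w) and y = x(θ',δ',w') satisfy ‖x−y‖² ≤ 4 − γ(δ+δ'). -/
open Real

set_option maxHeartbeats 1000000 in
theorem stmt7 (a : ℝ) (ha : 0 < a) (ha1 : a < 1) :
    ∃ γ > (0:ℝ), ∃ δ₀ > (0:ℝ), ∀ δ δ' : ℝ, δ ∈ Set.Icc (0:ℝ) δ₀ → δ' ∈ Set.Icc (0:ℝ) δ₀ →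
      ∀ w w' : ℝ, w ^ 2 ≤ δ → w' ^ 2 ≤ δ' → ∀ θ θ' : ℝ,
      ‖pt a θ δ w - pt a θ' δ' w'‖ ^ 2 ≤ 4 - γ * (δ + δ') := by
  refine ⟨1 - a^2, by nlinarith, 1 - a^2, by nlinarith, ?_⟩
  intro δ δ' hδ hδ' w w' hw hw' θ θ'
  obtain ⟨hδ0, hδ1⟩ := hδ
  obtain ⟨hδ'0, hδ'1⟩ := hδ'
  have ha2 : 0 < a^2 := by positivity
  have hδle : δ ≤ 1 := by nlinarith
  have hδ'le : δ' ≤ 1 := by nlinarith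
  set p := Real.sqrt (1-δ) with hpdef
  set q := Real.sqrt (1-δ') with hqdef
  have hp : p^2 = 1-δ := Real.sq_sqrt (by linarith)
  have hq : q^2 = 1-δ' := Real.sq_sqrt (by linarith)
  have hp0 : 0 ≤ p := Real.sqrt_nonneg _
  have hq0 : 0 ≤ q := Real.sqrt_nonneg _
  have hpq : p*q ≤ 1 - (δ+δ'-δ*δ')/2 := by
    have h1 : p*q = Real.sqrt ((1-δ)*(1-δ')) := (Real.sqrt_mul (by linarith) _).symm
    rw [h1]
    calc Real.sqrt ((1-δ)*(1-δ')) ≤ Real.sqrt ((1-(δ+δ'-δ*δ')/2)^2) :=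
          Real.sqrt_le_sqrt (by nlinarith [sq_nonneg (δ+δ'-δ*δ')])
      _ = 1-(δ+δ'-δ*δ')/2 := Real.sqrt_sq (by nlinarith)
  have hc : -1 ≤ Real.cos θ * Real.cos θ' + Real.sin θ * Real.sin θ' := by
    rw [← Real.cos_sub]; exact Real.neg_one_le_cos _
  have hn : ‖pt a θ δ w - pt a θ' δ' w'‖ ^ 2 =
      (p*Real.cos θ - q*Real.cos θ')^2 + (p*Real.sin θ - q*Real.sin θ')^2
        + (a*w - a*w')^2 := by
    simp only [pt, EuclideanSpace.norm_eq]
    rw [Real.sq_sqrt (by positivity)]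
    simp [Fin.sum_univ_three, sq_abs, hpdef, hqdef]
  rw [hn]
  have hs := Real.sin_sq_add_cos_sq θ
  have hs' := Real.sin_sq_add_cos_sq θ'
  have key : (p*Real.cos θ - q*Real.cos θ')^2 + (p*Real.sin θ - q*Real.sin θ')^2 =
      p^2 + q^2 - 2*(p*q)*(Real.cos θ * Real.cos θ' + Real.sin θ * Real.sin θ') := by
    linear_combination p^2*hs + q^2*hs'
  rw [key, hp, hq]
  have h2 : -(2*(p*q)*(Real.cos θ * Real.cos θ' + Real.sin θ * Real.sin θ')) ≤ 2*(p*q) := by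
    nlinarith [mul_nonneg hp0 hq0]
  have h4 : a^2*(w-w')^2 ≤ a^2*(2*(δ+δ')) := by
    have : (w-w')^2 ≤ 2*(δ+δ') := by nlinarith [sq_nonneg (w+w')]
    exact mul_le_mul_of_nonneg_left this (le_of_lt ha2)
  have h5 : δ*δ' ≤ (1-a^2)*δ' := mul_le_mul_of_nonneg_right hδ1 hδ'0
  nlinarith [h2, h4, h5, hpq]
end

section
/- (Localization) There exist constants C > 0 and ε₀ > 0 such that for all 0 < ε < ε₀: if points x = x(θ,δ,w) and y = x(θ+π+ψ,δ',w') in the ellipsoid (with w² ≤ δ, (w')² ≤ δ', ψ ∈ [−π,π]) satisfy 2 − ‖x−y‖ ≤ ε, then δ + δ' ≤ Cε, ψ² ≤ Cε, and w² + (w')² ≤ Cε. -/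
open Real

lemma norm_pt_sq (a θ θ' δ δ' w w' : ℝ) (hδ : δ ≤ 1) (hδ' : δ' ≤ 1) :
    ‖pt a θ δ w - pt a θ' δ' w'‖ ^ 2 =
      (1-δ) + (1-δ') - 2 * Real.sqrt (1-δ) * Real.sqrt (1-δ') * Real.cos (θ - θ')
        + a^2 * (w - w')^2 := by
  have h1 : (0:ℝ) ≤ 1 - δ := by linarith
  have h2 : (0:ℝ) ≤ 1 - δ' := by linarith
  have hn : ‖pt a θ δ w - pt a θ' δ' w'‖ ^ 2
      = ∑ i : Fin 3, (pt a θ δ w - pt a θ' δ' w') i ^ 2 := by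
    rw [EuclideanSpace.norm_eq, Real.sq_sqrt (by positivity)]
    simp [sq_abs]
  rw [hn, Fin.sum_univ_three]
  simp only [pt, WithLp.equiv_symm_apply, PiLp.toLp_apply, PiLp.sub_apply, Matrix.cons_val_zero,
    Matrix.cons_val_one, Matrix.head_cons, Matrix.cons_val_two, Matrix.tail_cons]
  have e1 : Real.sqrt (1-δ) ^ 2 = 1 - δ := Real.sq_sqrt h1
  have e2 : Real.sqrt (1-δ') ^ 2 = 1 - δ' := Real.sq_sqrt h2
  have s1 : Real.sin θ ^ 2 + Real.cos θ ^ 2 = 1 := Real.sin_sq_add_cos_sq θ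
  have s2 : Real.sin θ' ^ 2 + Real.cos θ' ^ 2 = 1 := Real.sin_sq_add_cos_sq θ'
  rw [Real.cos_sub]
  nlinarith [e1, e2, s1, s2]

set_option maxHeartbeats 1600000 in
theorem stmt8 (a : ℝ) (ha : 0 < a) (ha1 : a < 1) :
    ∃ C > (0:ℝ), ∃ ε₀ > (0:ℝ), ∀ ε : ℝ, 0 < ε → ε < ε₀ →
      ∀ θ ψ δ δ' w w' : ℝ, δ ∈ Set.Icc (0:ℝ) 1 → δ' ∈ Set.Icc (0:ℝ) 1 →
      w ^ 2 ≤ δ → w' ^ 2 ≤ δ' → ψ ∈ Set.Icc (-π) π →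
      2 - ‖pt a θ δ w - pt a (θ + π + ψ) δ' w'‖ ≤ ε →
      δ + δ' ≤ C * ε ∧ ψ ^ 2 ≤ C * ε ∧ w ^ 2 + w' ^ 2 ≤ C * ε := by
  have ha2 : 0 < 1 - a ^ 2 := by nlinarith
  refine ⟨2 / (1 - a^2) + 2 * π^2, by positivity, (1 - a^2)/4, by positivity,
    fun ε hε hε₀ θ ψ δ δ' w w' hδ hδ' hw hw' hψ hnear => ?_⟩
  obtain ⟨hδ0, hδ1⟩ := hδ
  obtain ⟨hδ'0, hδ'1⟩ := hδ'
  obtain ⟨hψl, hψr⟩ := hψ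
  set p := Real.sqrt (1-δ) with hp
  set q := Real.sqrt (1-δ') with hq
  have hp0 : 0 ≤ p := Real.sqrt_nonneg _
  have hq0 : 0 ≤ q := Real.sqrt_nonneg _
  have hp2 : p ^ 2 = 1 - δ := Real.sq_sqrt (by linarith)
  have hq2 : q ^ 2 = 1 - δ' := Real.sq_sqrt (by linarith)
  have hE : ‖pt a θ δ w - pt a (θ + π + ψ) δ' w'‖ ^ 2 =
      (1-δ) + (1-δ') + 2 * p * q * Real.cos ψ + a^2 * (w - w')^2 := by
    rw [norm_pt_sq a θ (θ + π + ψ) δ δ' w w' hδ1 hδ'1]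
    have h : θ - (θ + π + ψ) = -(π + ψ) := by ring
    rw [h, Real.cos_neg, Real.cos_add, Real.cos_pi, Real.sin_pi]
    ring
  have hεsmall : ε < 1 := by nlinarith
  have hnorm : 2 - ε ≤ ‖pt a θ δ w - pt a (θ + π + ψ) δ' w'‖ := by linarith
  have hsq : (2 - ε)^2 ≤ ‖pt a θ δ w - pt a (θ + π + ψ) δ' w'‖ ^ 2 :=
    pow_le_pow_left₀ (by linarith) hnorm 2
  rw [hE] at hsq
  have hww : (w - w')^2 ≤ 2 * (δ + δ') := by nlinarith [sq_nonneg (w + w')]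
  have haww : a^2 * (w - w')^2 ≤ 2 * a^2 * (δ + δ') := by nlinarith [sq_nonneg a]
  have hpq : p * q ≤ 1 - (δ + δ')/2 := by nlinarith [sq_nonneg (p - q)]
  have hcos : 0 ≤ Real.cos ψ := by
    by_contra h
    push_neg at h
    have h1 : 2 * p * q * Real.cos ψ ≤ 0 :=
      mul_nonpos_of_nonneg_of_nonpos (by positivity) h.le
    linarith [hsq, h1, haww, sq_nonneg ε,
      mul_nonneg (sq_nonneg a) (by linarith : (0:ℝ) ≤ 2 - (δ + δ')),
      mul_nonneg ha2.le (by linarith : (0:ℝ) ≤ 1 + (δ + δ'))]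
  have hkey : 2 * (1 - a^2) * (δ + δ') + 2 * (p * q) * (1 - Real.cos ψ) ≤ 4 * ε := by
    linarith [hsq, haww, hpq, sq_nonneg ε, mul_le_mul_of_nonneg_right hpq hcos]
  have hcosnn : (0:ℝ) ≤ 1 - Real.cos ψ := by linarith [Real.cos_le_one ψ]
  have hpqcos : (0:ℝ) ≤ p * q * (1 - Real.cos ψ) :=
    mul_nonneg (mul_nonneg hp0 hq0) hcosnn
  have hs : δ + δ' ≤ 2 / (1 - a^2) * ε := by
    rw [div_mul_eq_mul_div, le_div_iff₀ ha2]
    linarith [hkey, hpqcos]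
  have hshalf : δ + δ' ≤ 1/2 := by
    have h1 : 2 / (1 - a^2) * ε ≤ 2 / (1 - a^2) * ((1 - a^2)/4) :=
      mul_le_mul_of_nonneg_left hε₀.le (by positivity)
    calc δ + δ' ≤ 2 / (1 - a^2) * ε := hs
      _ ≤ 2 / (1 - a^2) * ((1 - a^2)/4) := h1
      _ = 1/2 := by field_simp; ring
  have hpql : 1/2 ≤ p * q := by
    have h12 : Real.sqrt (1/2) ≤ p := Real.sqrt_le_sqrt (by linarith)
    have h12' : Real.sqrt (1/2) ≤ q := Real.sqrt_le_sqrt (by linarith)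
    have h3 : Real.sqrt (1/2) * Real.sqrt (1/2) ≤ p * q :=
      mul_le_mul h12 h12' (Real.sqrt_nonneg _) hp0
    have h4 : Real.sqrt (1/2) * Real.sqrt (1/2) = 1/2 :=
      Real.mul_self_sqrt (by norm_num)
    linarith
  have hcosψ : 1 - Real.cos ψ ≤ 4 * ε := by
    have h1 := mul_le_mul_of_nonneg_right hpql hcosnn
    have h2 : (0:ℝ) ≤ (1 - a^2) * (δ + δ') :=
      mul_nonneg ha2.le (by linarith)
    linarith
  have hψsq : ψ ^ 2 ≤ 2 * π^2 * ε := by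
    have habs : |ψ| ≤ π := abs_le.mpr ⟨hψl, hψr⟩
    have hc := Real.cos_le_one_sub_mul_cos_sq habs
    have h2 : 2/π^2 * ψ^2 ≤ 4 * ε := by linarith
    have h3 := mul_le_mul_of_nonneg_left h2
      (by positivity : (0:ℝ) ≤ π^2/2)
    calc ψ^2 = π^2/2 * (2/π^2 * ψ^2) := by
          field_simp
        _ ≤ π^2/2 * (4*ε) := h3
        _ = 2*π^2*ε := by ring
  have hC : (0:ℝ) ≤ 2 * π^2 * ε := by positivity
  have hC' : (0:ℝ) ≤ 2 / (1 - a^2) * ε := by positivity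
  refine ⟨by rw [add_mul]; linarith, by rw [add_mul]; linarith,
    by rw [add_mul]; linarith⟩
end

section
/- (Overlap estimate) Let X₁, X₂, X₃ be independent uniform random points on the ellipsoid E = {(x₁,x₂,x₃) : x₁² + x₂² + x₃²/a² ≤ 1} with 0 < a < 1, and let W_{ij} = 2 − ‖X_i − X_j‖. Then there exist constants C' > 0 and ε₀ > 0 such that P(W₁₂ ≤ ε, W₁₃ ≤ ε) ≤ C'·ε^{11/2} for all 0 < ε < ε₀. -/
open Real MeasureTheory ProbabilityTheory

def Ell (a : ℝ) : Set (EuclideanSpace ℝ (Fin 3)) :=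
  {x | x 0 ^ 2 + x 1 ^ 2 + x 2 ^ 2 / a ^ 2 ≤ 1}

noncomputable def unifE (a : ℝ) : Measure (EuclideanSpace ℝ (Fin 3)) :=
  (volume (Ell a))⁻¹ • volume.restrict (Ell a)

namespace Stmt16

/-! ### 1D and box lemmas -/

lemma vol_1d (A B r : ℝ) (hr : 0 < r) (hAB : A ≤ B) :
    volume {v : ℝ | A ≤ v^2 ∧ v^2 ≤ B ∧ r ≤ |v|} ≤ ENNReal.ofReal ((B - A) / r) := by
  by_cases hB : B < r^2
  · have he : {v : ℝ | A ≤ v^2 ∧ v^2 ≤ B ∧ r ≤ |v|} = ∅ := by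
      ext v
      simp only [Set.mem_setOf_eq, Set.mem_empty_iff_false, iff_false, not_and]
      intro _ h2 h3
      nlinarith [abs_nonneg v, sq_abs v]
    rw [he]; simp
  push_neg at hB
  set A' := max A (r^2) with hA'
  have hA'B : A' ≤ B := max_le hAB hB
  have hA'0 : 0 ≤ A' := le_trans (sq_nonneg r) (le_max_right _ _)
  have hsA : r ≤ Real.sqrt A' := by
    rw [show r = Real.sqrt (r^2) by rw [Real.sqrt_sq hr.le]]
    exact Real.sqrt_le_sqrt (le_max_right _ _)
  have hsB : Real.sqrt A' ≤ Real.sqrt B := Real.sqrt_le_sqrt hA'B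
  have hsub : {v : ℝ | A ≤ v^2 ∧ v^2 ≤ B ∧ r ≤ |v|} ⊆
      Set.Icc (-(Real.sqrt B)) (-(Real.sqrt A')) ∪ Set.Icc (Real.sqrt A') (Real.sqrt B) := by
    rintro v ⟨h1, h2, h3⟩
    have hv : Real.sqrt A' ≤ |v| ∧ |v| ≤ Real.sqrt B := by
      constructor
      · rw [show |v| = Real.sqrt (v^2) by rw [Real.sqrt_sq_eq_abs]]
        refine Real.sqrt_le_sqrt (max_le h1 ?_)
        nlinarith [abs_nonneg v, sq_abs v]
      · rw [show |v| = Real.sqrt (v^2) by rw [Real.sqrt_sq_eq_abs]]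
        exact Real.sqrt_le_sqrt h2
    rcases abs_cases v with ⟨hc, _⟩ | ⟨hc, _⟩
    · right; rw [hc] at hv; exact ⟨hv.1, hv.2⟩
    · left
      rw [hc] at hv
      exact ⟨by linarith [hv.2], by linarith [hv.1]⟩
  calc volume {v : ℝ | A ≤ v^2 ∧ v^2 ≤ B ∧ r ≤ |v|}
      ≤ volume (Set.Icc (-(Real.sqrt B)) (-(Real.sqrt A')) ∪ Set.Icc (Real.sqrt A') (Real.sqrt B)) :=
        measure_mono hsub
    _ ≤ volume (Set.Icc (-(Real.sqrt B)) (-(Real.sqrt A'))) + volume (Set.Icc (Real.sqrt A') (Real.sqrt B)) :=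
        measure_union_le _ _
    _ = ENNReal.ofReal (Real.sqrt B - Real.sqrt A') + ENNReal.ofReal (Real.sqrt B - Real.sqrt A') := by
        rw [Real.volume_Icc, Real.volume_Icc]; ring_nf
    _ ≤ ENNReal.ofReal ((B - A) / r) := by
        rw [← ENNReal.ofReal_add (by linarith) (by linarith)]
        apply ENNReal.ofReal_le_ofReal
        have h1 : Real.sqrt A' ^ 2 = A' := Real.sq_sqrt hA'0
        have h2 : Real.sqrt B ^ 2 = B := Real.sq_sqrt (le_trans hA'0 hA'B)
        have hAA' : A ≤ A' := le_max_left _ _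
        rw [le_div_iff₀ hr]
        nlinarith [hsA, hsB, hr]

lemma vol_box (S : Set (ℝ × ℝ × ℝ)) (hS : MeasurableSet S)
    (a₁ b₁ a₂ b₂ ℓ : ℝ)
    (h1 : ∀ p ∈ S, p.1 ∈ Set.Icc a₁ b₁)
    (h2 : ∀ p ∈ S, p.2.1 ∈ Set.Icc a₂ b₂)
    (h3 : ∀ t u, volume {v : ℝ | (t, (u, v)) ∈ S} ≤ ENNReal.ofReal ℓ) :
    volume S ≤ ENNReal.ofReal (b₁ - a₁) * (ENNReal.ofReal (b₂ - a₂) * ENNReal.ofReal ℓ) := by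
  rw [Measure.volume_eq_prod, Measure.prod_apply hS]
  have key : ∀ t : ℝ, volume (Prod.mk t ⁻¹' S) ≤
      Set.indicator (Set.Icc a₁ b₁) (fun _ => ENNReal.ofReal (b₂ - a₂) * ENNReal.ofReal ℓ) t := by
    intro t
    by_cases ht : t ∈ Set.Icc a₁ b₁
    · rw [Set.indicator_of_mem ht]
      have hSt : MeasurableSet (Prod.mk t ⁻¹' S) := measurable_prodMk_left hS
      rw [Measure.volume_eq_prod, Measure.prod_apply hSt]
      have key2 : ∀ u : ℝ, volume (Prod.mk u ⁻¹' (Prod.mk t ⁻¹' S)) ≤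
          Set.indicator (Set.Icc a₂ b₂) (fun _ => ENNReal.ofReal ℓ) u := by
        intro u
        by_cases hu : u ∈ Set.Icc a₂ b₂
        · rw [Set.indicator_of_mem hu]
          exact h3 t u
        · rw [Set.indicator_of_notMem hu]
          have : Prod.mk u ⁻¹' (Prod.mk t ⁻¹' S) = ∅ := by
            ext v; simp only [Set.mem_preimage, Set.mem_empty_iff_false, iff_false]
            exact fun hv => hu (h2 _ hv)
          simp [this]
      calc ∫⁻ u, volume (Prod.mk u ⁻¹' (Prod.mk t ⁻¹' S)) ≤
          ∫⁻ u, Set.indicator (Set.Icc a₂ b₂) (fun _ => ENNReal.ofReal ℓ) u := lintegral_mono key2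
        _ = ENNReal.ofReal ℓ * volume (Set.Icc a₂ b₂) := lintegral_indicator_const measurableSet_Icc _
        _ = ENNReal.ofReal (b₂ - a₂) * ENNReal.ofReal ℓ := by rw [Real.volume_Icc, mul_comm]
    · rw [Set.indicator_of_notMem ht]
      have : Prod.mk t ⁻¹' S = ∅ := by
        ext q; simp only [Set.mem_preimage, Set.mem_empty_iff_false, iff_false]
        exact fun hq => ht (h1 _ hq)
      simp [this]
  calc ∫⁻ t, volume (Prod.mk t ⁻¹' S) ≤
      ∫⁻ t, Set.indicator (Set.Icc a₁ b₁) (fun _ => ENNReal.ofReal (b₂ - a₂) * ENNReal.ofReal ℓ) t :=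
        lintegral_mono key
    _ = (ENNReal.ofReal (b₂ - a₂) * ENNReal.ofReal ℓ) * volume (Set.Icc a₁ b₁) :=
        lintegral_indicator_const measurableSet_Icc _
    _ = ENNReal.ofReal (b₁ - a₁) * (ENNReal.ofReal (b₂ - a₂) * ENNReal.ofReal ℓ) := by
        rw [Real.volume_Icc, mul_comm]

/-! ### Measure preserving coordinate maps -/

noncomputable def f1 : ℝ × (ℝ × ℝ) → ℝ × (Fin 2 → ℝ) :=
  fun p => (p.1, MeasurableEquiv.finTwoArrow.symm p.2)

lemma hf1 : MeasurePreserving f1 volume volume := by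
  rw [Measure.volume_eq_prod (α := ℝ) (β := ℝ × ℝ),
    Measure.volume_eq_prod (α := ℝ) (β := Fin 2 → ℝ)]
  exact (MeasurePreserving.id _).prod ((volume_preserving_finTwoArrow ℝ).symm _)

noncomputable def f2 : ℝ × (Fin 2 → ℝ) → (Fin 3 → ℝ) :=
  (MeasurableEquiv.piFinSuccAbove (fun _ : Fin 3 => ℝ) 2).symm

lemma hf2 : MeasurePreserving f2 volume volume :=
  (volume_preserving_piFinSuccAbove (fun _ : Fin 3 => ℝ) 2).symm _

noncomputable def f3 : (Fin 3 → ℝ) → EuclideanSpace ℝ (Fin 3) :=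
  MeasurableEquiv.toLp 2 (Fin 3 → ℝ)

lemma hf3 : MeasurePreserving f3 volume volume :=
  (EuclideanSpace.volume_preserving_symm_measurableEquiv_toLp (Fin 3)).symm _

noncomputable def ΨB : ℝ × (ℝ × ℝ) → EuclideanSpace ℝ (Fin 3) := f3 ∘ f2 ∘ f1

lemma hΨB : MeasurePreserving ΨB volume volume := hf3.comp (hf2.comp hf1)

lemma ΨB_apply (t u v : ℝ) :
    ΨB (t, (u, v)) 0 = u ∧ ΨB (t, (u, v)) 1 = v ∧ ΨB (t, (u, v)) 2 = t := by
  have h3 : ∀ f : Fin 3 → ℝ, ∀ i, f3 f i = f i := fun _ _ => rfl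
  have e0 : (2 : Fin 3).succAbove 0 = 0 := rfl
  have e1 : (2 : Fin 3).succAbove 1 = 1 := rfl
  refine ⟨?_, ?_, ?_⟩ <;>
    simp only [ΨB, Function.comp_apply, f1, f2, MeasurableEquiv.piFinSuccAbove_symm_apply, h3]
  · rw [← e0, Fin.insertNthEquiv, Equiv.coe_fn_mk, Fin.insertNth_apply_succAbove]
    simp
  · rw [← e1, Fin.insertNthEquiv, Equiv.coe_fn_mk, Fin.insertNth_apply_succAbove]
    simp
  · rw [Fin.insertNthEquiv, Equiv.coe_fn_mk, Fin.insertNth_apply_same]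

noncomputable def ΨA : ℝ × (ℝ × ℝ) → EuclideanSpace ℝ (Fin 3) :=
  ΨB ∘ (fun p => (p.1, (p.2.2, p.2.1)))

lemma hΨA : MeasurePreserving ΨA volume volume := by
  refine hΨB.comp ?_
  have h : MeasurePreserving (Prod.map (id : ℝ → ℝ) (Prod.swap : ℝ × ℝ → ℝ × ℝ))
      ((volume : Measure ℝ).prod ((volume : Measure ℝ).prod (volume : Measure ℝ)))
      ((volume : Measure ℝ).prod ((volume : Measure ℝ).prod (volume : Measure ℝ))) :=
    (MeasurePreserving.id _).prod Measure.measurePreserving_swap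
  rw [← Measure.volume_eq_prod (α := ℝ) (β := ℝ), ← Measure.volume_eq_prod] at h
  exact h

lemma ΨA_apply (t u v : ℝ) :
    ΨA (t, (u, v)) 0 = v ∧ ΨA (t, (u, v)) 1 = u ∧ ΨA (t, (u, v)) 2 = t := by
  have := ΨB_apply t v u
  exact ⟨this.1, this.2.1, this.2.2⟩

end Stmt16

namespace Stmt16

/-! ### Euclidean coordinate facts -/

lemma euc_norm_sq (y : EuclideanSpace ℝ (Fin 3)) : ‖y‖^2 = y 0^2 + y 1^2 + y 2^2 := by
  rw [EuclideanSpace.norm_eq, Real.sq_sqrt (by positivity), Fin.sum_univ_three]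
  simp [sq_abs]

lemma abs_coord_le (y : EuclideanSpace ℝ (Fin 3)) (i : Fin 3) : |y i| ≤ ‖y‖ := by
  have h := euc_norm_sq y
  have h2 : y i ^ 2 ≤ ‖y‖ ^ 2 := by
    fin_cases i <;> simp at h ⊢ <;> nlinarith [sq_nonneg (y 0), sq_nonneg (y 1), sq_nonneg (y 2)]
  nlinarith [norm_nonneg y, abs_nonneg (y i), sq_abs (y i)]

lemma coord_add (x y : EuclideanSpace ℝ (Fin 3)) (i : Fin 3) : (x + y) i = x i + y i := rfl

lemma measurable_coord (i : Fin 3) : Measurable (fun y : EuclideanSpace ℝ (Fin 3) => y i) :=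
  (measurable_pi_apply i).comp (MeasurableEquiv.toLp 2 (Fin 3 → ℝ)).symm.measurable

lemma ell_meas (a : ℝ) : MeasurableSet (Ell a) := by
  have : Ell a = {y : EuclideanSpace ℝ (Fin 3) |
      y 0 ^ 2 + y 1 ^ 2 + y 2 ^ 2 / a ^ 2 ≤ 1} := rfl
  rw [this]
  exact measurableSet_le ((((measurable_coord 0).pow_const 2).add
    ((measurable_coord 1).pow_const 2)).add
    (((measurable_coord 2).pow_const 2).div_const _)) measurable_const

lemma ell_norm_le {a : ℝ} (ha : 0 < a) (ha1 : a < 1) {y : EuclideanSpace ℝ (Fin 3)}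
    (hy : y ∈ Ell a) : ‖y‖ ≤ 1 := by
  have hy' : y 0 ^ 2 + y 1 ^ 2 + y 2 ^ 2 / a ^ 2 ≤ 1 := hy
  have h2 : y 2 ^ 2 ≤ y 2 ^ 2 / a ^ 2 := by
    rw [le_div_iff₀ (by positivity)]
    nlinarith [mul_nonneg (sq_nonneg (y 2)) (by nlinarith : (0:ℝ) ≤ 1 - a ^ 2)]
  have hn := euc_norm_sq y
  nlinarith [norm_nonneg y]

/-- coordinate facts for points in the shell -/
lemma ell_facts {a B L ε : ℝ} (ha : 0 < a) (ha1 : a < 1)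
    (hB : B = 2 * a ^ 2 / (1 - a ^ 2)) (hL : L = 2 + B) (hε : 0 < ε) (hε1 : ε ≤ 1)
    {y : EuclideanSpace ℝ (Fin 3)} (hy : y ∈ Ell a) (hny : 1 - ε ≤ ‖y‖) :
    y 2 ^ 2 ≤ B * ε ∧ 1 - L * ε ≤ y 0 ^ 2 + y 1 ^ 2 ∧ y 0 ^ 2 + y 1 ^ 2 ≤ 1 := by
  have hy' : y 0 ^ 2 + y 1 ^ 2 + y 2 ^ 2 / a ^ 2 ≤ 1 := hy
  have ha2 : 0 < 1 - a ^ 2 := by nlinarith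
  have hn := euc_norm_sq y
  have hn2 : (1 - ε) ^ 2 ≤ ‖y‖ ^ 2 := by
    have : 0 ≤ 1 - ε := by linarith
    nlinarith [norm_nonneg y]
  have hdiv : y 2 ^ 2 ≤ (2 * ε - ε ^ 2 + y 2 ^ 2) * a ^ 2 := by
    rw [← div_le_iff₀ (by positivity : (0:ℝ) < a ^ 2)]
    nlinarith
  have h1 : y 2 ^ 2 ≤ B * ε := by
    rw [hB, div_mul_eq_mul_div, le_div_iff₀ ha2]
    nlinarith
  refine ⟨h1, ?_, ?_⟩
  · rw [hL]
    nlinarith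
  · have : 0 ≤ y 2 ^ 2 / a ^ 2 := by positivity
    linarith

/-- The general box bound in Euclidean space :
outer coordinate 2 in a `√(Bε)` window, middle coordinate `k` in a `W`-window around `m`,
inner coordinate `j` pinned in an interval of length `Lε/r`. -/
lemma vol_core {a B L ε : ℝ} (ha : 0 < a) (ha1 : a < 1)
    (hB : B = 2 * a ^ 2 / (1 - a ^ 2)) (hL : L = 2 + B) (hε : 0 < ε) (hε1 : ε ≤ 1)
    (T : Set (EuclideanSpace ℝ (Fin 3))) (hT : MeasurableSet T)
    (Ψ : ℝ × (ℝ × ℝ) → EuclideanSpace ℝ (Fin 3)) (hΨ : MeasurePreserving Ψ volume volume)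
    (j k : Fin 3)
    (hco : ∀ t u v : ℝ, Ψ (t, (u, v)) j = v ∧ Ψ (t, (u, v)) k = u ∧ Ψ (t, (u, v)) 2 = t)
    (m W r : ℝ) (hr : 0 < r)
    (hst : ∀ y ∈ T, y 2 ^ 2 ≤ B * ε ∧ 1 - L * ε ≤ y j ^ 2 + y k ^ 2 ∧
      y j ^ 2 + y k ^ 2 ≤ 1 ∧ |y k - m| ≤ W ∧ r ≤ |y j|) :
    volume T ≤ ENNReal.ofReal (2 * Real.sqrt (B * ε)) *
      (ENNReal.ofReal (2 * W) * ENNReal.ofReal (L * ε / r)) := by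
  have hL0 : 0 < L := by
    rw [hL, hB]
    have : 0 < 1 - a ^ 2 := by nlinarith
    positivity
  rw [← hΨ.measure_preimage hT.nullMeasurableSet]
  have hb1 : Real.sqrt (B * ε) - (-Real.sqrt (B * ε)) = 2 * Real.sqrt (B * ε) := by ring
  have hb2 : (m + W) - (m - W) = 2 * W := by ring
  rw [← hb1, ← hb2]
  apply vol_box _ (hΨ.measurable hT)
  · rintro ⟨t, u, v⟩ hp
    have hy := hst _ hp
    have hc := hco t u v
    rw [hc.2.2] at hy
    have : |t| ≤ Real.sqrt (B * ε) := by
      rw [← Real.sqrt_sq_eq_abs]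
      exact Real.sqrt_le_sqrt hy.1
    exact abs_le.mp this
  · rintro ⟨t, u, v⟩ hp
    have hy := hst _ hp
    have hc := hco t u v
    rw [hc.2.1] at hy
    have := hy.2.2.2.1
    rw [abs_le] at this
    constructor <;> [linarith [this.1]; linarith [this.2]]
  · intro t u
    have hsub : {v : ℝ | (t, (u, v)) ∈ Ψ ⁻¹' T} ⊆
        {v : ℝ | (1 - L * ε - u ^ 2) ≤ v ^ 2 ∧ v ^ 2 ≤ 1 - u ^ 2 ∧ r ≤ |v|} := by
      intro v hv
      have hy := hst _ hv
      have hc := hco t u v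
      rw [hc.1, hc.2.1] at hy
      exact ⟨by linarith [hy.2.1], by linarith [hy.2.2.1], hy.2.2.2.2⟩
    calc volume {v : ℝ | (t, (u, v)) ∈ Ψ ⁻¹' T}
        ≤ volume {v : ℝ | (1 - L * ε - u ^ 2) ≤ v ^ 2 ∧ v ^ 2 ≤ 1 - u ^ 2 ∧ r ≤ |v|} :=
          measure_mono hsub
      _ ≤ ENNReal.ofReal ((1 - u ^ 2 - (1 - L * ε - u ^ 2)) / r) :=
          vol_1d _ _ _ hr (by nlinarith)
      _ = ENNReal.ofReal (L * ε / r) := by norm_num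

end Stmt16

namespace Stmt16

lemma shell_meas (a ε : ℝ) :
    MeasurableSet {y : EuclideanSpace ℝ (Fin 3) | y ∈ Ell a ∧ 1 - ε ≤ ‖y‖} :=
  (ell_meas a).inter (measurableSet_le measurable_const measurable_norm)

lemma shell_vol {a B L ε : ℝ} (ha : 0 < a) (ha1 : a < 1)
    (hB : B = 2 * a ^ 2 / (1 - a ^ 2)) (hL : L = 2 + B) (hε : 0 < ε) (hεL : L * ε ≤ 1 / 2) :
    volume {y : EuclideanSpace ℝ (Fin 3) | y ∈ Ell a ∧ 1 - ε ≤ ‖y‖}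
      ≤ ENNReal.ofReal (16 * L * Real.sqrt B * (Real.sqrt ε * ε)) := by
  have ha2 : 0 < 1 - a ^ 2 := by nlinarith
  have hB0 : 0 < B := by rw [hB]; positivity
  have hL0 : 0 < L := by rw [hL]; linarith
  have hL2 : 2 ≤ L := by rw [hL]; linarith
  have hε1 : ε ≤ 1 := by nlinarith
  set S := {y : EuclideanSpace ℝ (Fin 3) | y ∈ Ell a ∧ 1 - ε ≤ ‖y‖} with hS
  set S0 := S ∩ {y : EuclideanSpace ℝ (Fin 3) | 1/4 ≤ y 0 ^ 2} with hS0
  set S1 := S ∩ {y : EuclideanSpace ℝ (Fin 3) | 1/4 ≤ y 1 ^ 2} with hS1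
  have hmeas0 : MeasurableSet S0 := (shell_meas a ε).inter
    (measurableSet_le measurable_const ((measurable_coord 0).pow_const 2))
  have hmeas1 : MeasurableSet S1 := (shell_meas a ε).inter
    (measurableSet_le measurable_const ((measurable_coord 1).pow_const 2))
  have hsub : S ⊆ S0 ∪ S1 := by
    intro y hy
    have hf := ell_facts ha ha1 hB hL hε hε1 hy.1 hy.2
    by_cases h0 : 1/4 ≤ y 0 ^ 2
    · exact Or.inl ⟨hy, h0⟩
    · refine Or.inr ⟨hy, ?_⟩
      push_neg at h0
      show (1:ℝ)/4 ≤ y 1 ^ 2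
      nlinarith [hf.2.1, hεL]
  have hbound : ∀ i : Fin 2, ∀ (T : Set (EuclideanSpace ℝ (Fin 3))), MeasurableSet T →
      True → volume T ≤ volume T := fun _ _ _ _ => le_rfl
  have h0 : volume S0 ≤ ENNReal.ofReal (2 * Real.sqrt (B * ε)) *
      (ENNReal.ofReal (2 * 1) * ENNReal.ofReal (L * ε / (1/2))) := by
    apply vol_core ha ha1 hB hL hε hε1 S0 hmeas0 ΨA hΨA 0 1 ΨA_apply 0 1 (1/2) (by norm_num)
    rintro y ⟨⟨hy1, hy2⟩, hy3⟩
    have hf := ell_facts ha ha1 hB hL hε hε1 hy1 hy2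
    refine ⟨hf.1, hf.2.1, hf.2.2, ?_, ?_⟩
    · rw [sub_zero, ← Real.sqrt_sq_eq_abs]
      calc Real.sqrt (y 1 ^ 2) ≤ Real.sqrt 1 := Real.sqrt_le_sqrt (by nlinarith [hf.2.2, sq_nonneg (y 0)])
        _ = 1 := Real.sqrt_one
    · rw [show (1:ℝ)/2 = Real.sqrt ((1:ℝ)/4) by
        rw [show (1:ℝ)/4 = (1/2)^2 by norm_num, Real.sqrt_sq (by norm_num)]]
      rw [← Real.sqrt_sq_eq_abs]
      exact Real.sqrt_le_sqrt hy3
  have h1 : volume S1 ≤ ENNReal.ofReal (2 * Real.sqrt (B * ε)) *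
      (ENNReal.ofReal (2 * 1) * ENNReal.ofReal (L * ε / (1/2))) := by
    apply vol_core ha ha1 hB hL hε hε1 S1 hmeas1 ΨB hΨB 1 0
      (fun t u v => ⟨(ΨB_apply t u v).2.1, (ΨB_apply t u v).1, (ΨB_apply t u v).2.2⟩)
      0 1 (1/2) (by norm_num)
    rintro y ⟨⟨hy1, hy2⟩, hy3⟩
    have hf := ell_facts ha ha1 hB hL hε hε1 hy1 hy2
    refine ⟨hf.1, by linarith [hf.2.1], by linarith [hf.2.2], ?_, ?_⟩
    · rw [sub_zero, ← Real.sqrt_sq_eq_abs]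
      calc Real.sqrt (y 0 ^ 2) ≤ Real.sqrt 1 := Real.sqrt_le_sqrt (by nlinarith [hf.2.2, sq_nonneg (y 1)])
        _ = 1 := Real.sqrt_one
    · rw [show (1:ℝ)/2 = Real.sqrt ((1:ℝ)/4) by
        rw [show (1:ℝ)/4 = (1/2)^2 by norm_num, Real.sqrt_sq (by norm_num)]]
      rw [← Real.sqrt_sq_eq_abs]
      exact Real.sqrt_le_sqrt hy3
  calc volume S ≤ volume (S0 ∪ S1) := measure_mono hsub
    _ ≤ volume S0 + volume S1 := measure_union_le _ _
    _ ≤ (ENNReal.ofReal (2 * Real.sqrt (B * ε)) *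
          (ENNReal.ofReal (2 * 1) * ENNReal.ofReal (L * ε / (1/2)))) +
        (ENNReal.ofReal (2 * Real.sqrt (B * ε)) *
          (ENNReal.ofReal (2 * 1) * ENNReal.ofReal (L * ε / (1/2)))) := add_le_add h0 h1
    _ ≤ ENNReal.ofReal (16 * L * Real.sqrt B * (Real.sqrt ε * ε)) := by
        rw [← ENNReal.ofReal_mul (by positivity), ← ENNReal.ofReal_mul (by positivity),
          ← ENNReal.ofReal_add (by positivity) (by positivity)]
        apply ENNReal.ofReal_le_ofReal
        rw [Real.sqrt_mul hB0.le]
        rw [le_div_iff₀ (by norm_num : (0:ℝ) < 2)] at *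
        nlinarith [Real.sqrt_nonneg B, Real.sqrt_nonneg ε, Real.sq_sqrt hε.le,
          Real.sq_sqrt hB0.le, mul_nonneg (Real.sqrt_nonneg B) (Real.sqrt_nonneg ε)]

end Stmt16

namespace Stmt16

lemma local_vol {a B L ε : ℝ} (ha : 0 < a) (ha1 : a < 1)
    (hB : B = 2 * a ^ 2 / (1 - a ^ 2)) (hL : L = 2 + B) (hε : 0 < ε)
    (hεL : L * ε ≤ 1 / 2) (hεs : Real.sqrt ε ≤ 1 / 8)
    (x : EuclideanSpace ℝ (Fin 3)) (hx : x ∈ Ell a) (hnx : 1 - ε ≤ ‖x‖) :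
    volume {y : EuclideanSpace ℝ (Fin 3) |
        y ∈ Ell a ∧ 1 - ε ≤ ‖y‖ ∧ ‖x + y‖ ≤ 2 * Real.sqrt ε}
      ≤ ENNReal.ofReal (32 * L * Real.sqrt B * (ε * ε)) := by
  have ha2 : 0 < 1 - a ^ 2 := by nlinarith
  have hB0 : 0 < B := by rw [hB]; positivity
  have hL0 : 0 < L := by rw [hL]; linarith
  have hL2 : 2 ≤ L := by rw [hL]; linarith
  have hε1 : ε ≤ 1 := by nlinarith
  set T := {y : EuclideanSpace ℝ (Fin 3) |
      y ∈ Ell a ∧ 1 - ε ≤ ‖y‖ ∧ ‖x + y‖ ≤ 2 * Real.sqrt ε} with hT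
  have hTm : MeasurableSet T := by
    have h1 : MeasurableSet {y : EuclideanSpace ℝ (Fin 3) | ‖x + y‖ ≤ 2 * Real.sqrt ε} :=
      measurableSet_le (measurable_id.const_add x).norm measurable_const
    exact (ell_meas a).inter ((measurableSet_le measurable_const measurable_norm).inter h1)
  have hfx := ell_facts ha ha1 hB hL hε hε1 hx hnx
  -- the key per-point facts
  have hkey : ∀ i : Fin 3, ∀ y, y ∈ T → |y i + x i| ≤ 2 * Real.sqrt ε := by
    intro i y hy
    calc |y i + x i| = |(x + y) i| := by rw [coord_add]; ring_nf
      _ ≤ ‖x + y‖ := abs_coord_le _ _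
      _ ≤ 2 * Real.sqrt ε := hy.2.2
  have hmain : ∀ (j k : Fin 3) (Ψ : ℝ × (ℝ × ℝ) → EuclideanSpace ℝ (Fin 3)),
      MeasurePreserving Ψ volume volume →
      (∀ t u v : ℝ, Ψ (t, (u, v)) j = v ∧ Ψ (t, (u, v)) k = u ∧ Ψ (t, (u, v)) 2 = t) →
      (∀ y : EuclideanSpace ℝ (Fin 3), y j ^ 2 + y k ^ 2 = y 0 ^ 2 + y 1 ^ 2) →
      (1/2 ≤ |x j|) →
      volume T ≤ ENNReal.ofReal (2 * Real.sqrt (B * ε)) *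
        (ENNReal.ofReal (2 * (2 * Real.sqrt ε)) * ENNReal.ofReal (L * ε / (1/4))) := by
    intro j k Ψ hΨ hco hsum hxj
    apply vol_core ha ha1 hB hL hε hε1 T hTm Ψ hΨ j k hco (-(x k)) (2 * Real.sqrt ε) (1/4)
      (by norm_num)
    intro y hy
    have hf := ell_facts ha ha1 hB hL hε hε1 hy.1 hy.2.1
    have hk := hkey k y hy
    have hj := hkey j y hy
    refine ⟨hf.1, by rw [hsum y]; exact hf.2.1, by rw [hsum y]; exact hf.2.2, ?_, ?_⟩
    · calc |y k - -(x k)| = |y k + x k| := by ring_nf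
        _ ≤ 2 * Real.sqrt ε := hk
    · have h1 : |x j| ≤ |y j + x j| + |y j| := by
        calc |x j| = |(y j + x j) + (- y j)| := by ring_nf
          _ ≤ |y j + x j| + |-(y j)| := abs_add_le _ _
          _ = |y j + x j| + |y j| := by rw [abs_neg]
      linarith [hj]
  -- case split on which of x 0, x 1 is large
  have hbig : 1/2 ≤ |x 0| ∨ 1/2 ≤ |x 1| := by
    have h12 : (1:ℝ)/2 ≤ x 0 ^ 2 + x 1 ^ 2 := by linarith [hfx.2.1]
    by_cases hc : x 1 ^ 2 ≤ x 0 ^ 2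
    · left
      have : (1:ℝ)/4 ≤ x 0 ^ 2 := by linarith
      nlinarith [abs_nonneg (x 0), sq_abs (x 0)]
    · right
      push_neg at hc
      have : (1:ℝ)/4 ≤ x 1 ^ 2 := by linarith
      nlinarith [abs_nonneg (x 1), sq_abs (x 1)]
  have hfin : volume T ≤ ENNReal.ofReal (2 * Real.sqrt (B * ε)) *
      (ENNReal.ofReal (2 * (2 * Real.sqrt ε)) * ENNReal.ofReal (L * ε / (1/4))) := by
    rcases hbig with hb | hb
    · exact hmain 0 1 ΨA hΨA ΨA_apply (fun y => rfl) hb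
    · exact hmain 1 0 ΨB hΨB
        (fun t u v => ⟨(ΨB_apply t u v).2.1, (ΨB_apply t u v).1, (ΨB_apply t u v).2.2⟩)
        (fun y => by ring) hb
  refine le_trans hfin ?_
  rw [← ENNReal.ofReal_mul (by positivity), ← ENNReal.ofReal_mul (by positivity)]
  apply ENNReal.ofReal_le_ofReal
  rw [Real.sqrt_mul hB0.le]
  have hss : Real.sqrt ε * Real.sqrt ε = ε := Real.mul_self_sqrt hε.le
  have heq : 2 * (Real.sqrt B * Real.sqrt ε) * (2 * (2 * Real.sqrt ε) * (L * ε / (1/4)))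
      = 32 * L * Real.sqrt B * ((Real.sqrt ε * Real.sqrt ε) * ε) := by ring
  rw [heq, hss]

end Stmt16

namespace Stmt16

lemma ell_vol_pos {a : ℝ} (ha : 0 < a) (ha1 : a < 1) : 0 < volume (Ell a) := by
  have hsub : Metric.closedBall (0 : EuclideanSpace ℝ (Fin 3)) a ⊆ Ell a := by
    intro y hy
    rw [Metric.mem_closedBall, dist_zero_right] at hy
    have hn : y 0 ^ 2 + y 1 ^ 2 + y 2 ^ 2 ≤ a ^ 2 := by
      rw [← euc_norm_sq]
      nlinarith [norm_nonneg y]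
    show y 0 ^ 2 + y 1 ^ 2 + y 2 ^ 2 / a ^ 2 ≤ 1
    have h1a : (0:ℝ) ≤ 1 - a ^ 2 := by nlinarith
    have key : y 2 ^ 2 / a ^ 2 ≤ 1 - y 0 ^ 2 - y 1 ^ 2 := by
      rw [div_le_iff₀ (by positivity)]
      nlinarith [mul_nonneg (sq_nonneg (y 0)) h1a, mul_nonneg (sq_nonneg (y 1)) h1a]
    linarith
  exact lt_of_lt_of_le (Metric.measure_closedBall_pos volume _ ha) (measure_mono hsub)

lemma ell_vol_lt_top {a : ℝ} (ha : 0 < a) (ha1 : a < 1) : volume (Ell a) < ⊤ := by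
  have hsub : Ell a ⊆ Metric.closedBall (0 : EuclideanSpace ℝ (Fin 3)) 1 := by
    intro y hy
    rw [Metric.mem_closedBall, dist_zero_right]
    exact ell_norm_le ha ha1 hy
  exact lt_of_le_of_lt (measure_mono hsub) (measure_closedBall_lt_top)

lemma pair_facts {a ε : ℝ} (ha : 0 < a) (ha1 : a < 1) (hε : 0 < ε) (hε1 : ε ≤ 1)
    {x y : EuclideanSpace ℝ (Fin 3)} (hx : x ∈ Ell a) (hy : y ∈ Ell a)
    (hxy : 2 - ‖x - y‖ ≤ ε) :
    1 - ε ≤ ‖x‖ ∧ 1 - ε ≤ ‖y‖ ∧ ‖x + y‖ ≤ 2 * Real.sqrt ε := by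
  have hx1 := ell_norm_le ha ha1 hx
  have hy1 := ell_norm_le ha ha1 hy
  have ht : 2 - ε ≤ ‖x - y‖ := by linarith
  have hts : ‖x - y‖ ≤ ‖x‖ + ‖y‖ := norm_sub_le x y
  refine ⟨by linarith, by linarith, ?_⟩
  have par := parallelogram_law_with_norm ℝ x y
  have h2 : ‖x + y‖ ^ 2 ≤ 4 * ε := by
    nlinarith [norm_nonneg (x - y), norm_nonneg x, norm_nonneg y]
  by_contra hcon
  push_neg at hcon
  nlinarith [Real.sq_sqrt hε.le, Real.sqrt_nonneg ε, norm_nonneg (x + y)]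

lemma D_meas (a ε : ℝ) (x : EuclideanSpace ℝ (Fin 3)) :
    MeasurableSet {y : EuclideanSpace ℝ (Fin 3) |
      y ∈ Ell a ∧ 1 - ε ≤ ‖y‖ ∧ ‖x + y‖ ≤ 2 * Real.sqrt ε} := by
  have h1 : MeasurableSet {y : EuclideanSpace ℝ (Fin 3) | ‖x + y‖ ≤ 2 * Real.sqrt ε} :=
    measurableSet_le (measurable_id.const_add x).norm measurable_const
  exact (ell_meas a).inter ((measurableSet_le measurable_const measurable_norm).inter h1)

lemma D_subset (a ε : ℝ) (x : EuclideanSpace ℝ (Fin 3)) :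
    {y : EuclideanSpace ℝ (Fin 3) | y ∈ Ell a ∧ 1 - ε ≤ ‖y‖ ∧ ‖x + y‖ ≤ 2 * Real.sqrt ε}
      ⊆ Ell a := fun _ hy => hy.1

end Stmt16

open Stmt16 in
/-- Overlap estimate: `P(W₁₂ ≤ ε, W₁₃ ≤ ε) ≤ C' ε^{11/2}` for small `ε`. -/
theorem stmt16 (a : ℝ) (ha : 0 < a) (ha1 : a < 1)
    {Ω : Type*} [MeasurableSpace Ω] (P : Measure Ω) [IsProbabilityMeasure P]
    (X : Fin 3 → Ω → EuclideanSpace ℝ (Fin 3))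
    (hX : ∀ i, Measurable (X i))
    (hd : ∀ i, P.map (X i) = unifE a)
    (hindep : iIndepFun X P) :
    ∃ C' > (0:ℝ), ∃ ε₀ > (0:ℝ), ∀ ε : ℝ, 0 < ε → ε < ε₀ →
      P {ω | 2 - ‖X 0 ω - X 1 ω‖ ≤ ε ∧ 2 - ‖X 0 ω - X 2 ω‖ ≤ ε}
        ≤ ENNReal.ofReal (C' * ε ^ ((11:ℝ)/2)) := by
  have ha2 : 0 < 1 - a ^ 2 := by nlinarith
  set B : ℝ := 2 * a ^ 2 / (1 - a ^ 2) with hB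
  set L : ℝ := 2 + B with hL
  have hB0 : 0 < B := by rw [hB]; positivity
  have hL0 : 0 < L := by rw [hL]; linarith
  have hsB : 0 < Real.sqrt B := Real.sqrt_pos.mpr hB0
  set V := volume (Ell a) with hV
  have hV0 : 0 < V := ell_vol_pos ha ha1
  have hVt : V < ⊤ := ell_vol_lt_top ha ha1
  set v := V.toReal with hv
  have hv0 : 0 < v := ENNReal.toReal_pos hV0.ne' hVt.ne
  set C₂ : ℝ := 32 * L * Real.sqrt B with hC₂
  set C₁ : ℝ := 16 * L * Real.sqrt B with hC₁
  have hC₂0 : 0 < C₂ := by positivity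
  have hC₁0 : 0 < C₁ := by positivity
  refine ⟨(C₂ / v)^2 * (C₁ / v), by positivity, min (1/(2*L)) (1/64), by positivity, ?_⟩
  intro ε hε hεlt
  have hεL : L * ε ≤ 1/2 := by
    have h1 : ε ≤ 1/(2*L) := le_of_lt (lt_of_lt_of_le hεlt (min_le_left _ _))
    rw [le_div_iff₀ (by positivity)] at h1
    nlinarith
  have hε64 : ε ≤ 1/64 := le_of_lt (lt_of_lt_of_le hεlt (min_le_right _ _))
  have hε1 : ε ≤ 1 := by linarith
  have hεs : Real.sqrt ε ≤ 1/8 := by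
    rw [show (1:ℝ)/8 = Real.sqrt ((1/8)^2) by rw [Real.sqrt_sq (by norm_num)]]
    exact Real.sqrt_le_sqrt (by nlinarith)
  -- measures
  have happly : ∀ (s : Set (EuclideanSpace ℝ (Fin 3))), MeasurableSet s →
      unifE a s = V⁻¹ * volume (s ∩ Ell a) := by
    intro s hs
    simp only [unifE, Measure.smul_apply, smul_eq_mul, Measure.restrict_apply hs, hV]
  haveI hPμ : IsProbabilityMeasure (unifE a) := by
    constructor
    rw [happly Set.univ MeasurableSet.univ, Set.univ_inter]
    exact ENNReal.inv_mul_cancel hV0.ne' hVt.ne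
  set μ := unifE a with hμ
  -- the sets
  set D : EuclideanSpace ℝ (Fin 3) → Set (EuclideanSpace ℝ (Fin 3)) := fun x =>
    {y | y ∈ Ell a ∧ 1 - ε ≤ ‖y‖ ∧ ‖x + y‖ ≤ 2 * Real.sqrt ε} with hD
  set Sh : Set (EuclideanSpace ℝ (Fin 3)) := {x | x ∈ Ell a ∧ 1 - ε ≤ ‖x‖} with hSh
  set K : Set ((EuclideanSpace ℝ (Fin 3)) × ((EuclideanSpace ℝ (Fin 3)) × (EuclideanSpace ℝ (Fin 3)))) :=
    {p | (p.1 ∈ Ell a ∧ 1 - ε ≤ ‖p.1‖) ∧ p.2.1 ∈ D p.1 ∧ p.2.2 ∈ D p.1} with hK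
  have hKm : MeasurableSet K := by
    have e1 : MeasurableSet {p : (EuclideanSpace ℝ (Fin 3)) × ((EuclideanSpace ℝ (Fin 3)) × (EuclideanSpace ℝ (Fin 3))) |
        p.1 ∈ Ell a ∧ 1 - ε ≤ ‖p.1‖} :=
      ((ell_meas a).preimage measurable_fst).inter
        (measurableSet_le measurable_const measurable_fst.norm)
    have e2 : MeasurableSet {p : (EuclideanSpace ℝ (Fin 3)) × ((EuclideanSpace ℝ (Fin 3)) × (EuclideanSpace ℝ (Fin 3))) |
        p.2.1 ∈ D p.1} := by
      refine (((ell_meas a).preimage (measurable_fst.comp measurable_snd)).inter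
        ((measurableSet_le measurable_const (measurable_fst.comp measurable_snd).norm).inter ?_))
      exact measurableSet_le (measurable_fst.add (measurable_fst.comp measurable_snd)).norm
        measurable_const
    have e3 : MeasurableSet {p : (EuclideanSpace ℝ (Fin 3)) × ((EuclideanSpace ℝ (Fin 3)) × (EuclideanSpace ℝ (Fin 3))) |
        p.2.2 ∈ D p.1} := by
      refine (((ell_meas a).preimage (measurable_snd.comp measurable_snd)).inter
        ((measurableSet_le measurable_const (measurable_snd.comp measurable_snd).norm).inter ?_))
      exact measurableSet_le (measurable_fst.add (measurable_snd.comp measurable_snd)).norm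
        measurable_const
    exact e1.inter (e2.inter e3)
  -- independence: the map of the triple
  set Φ : Ω → (EuclideanSpace ℝ (Fin 3)) × ((EuclideanSpace ℝ (Fin 3)) × (EuclideanSpace ℝ (Fin 3))) :=
    fun ω => (X 0 ω, (X 1 ω, X 2 ω)) with hΦdef
  have hΦ : Measurable Φ := (hX 0).prodMk ((hX 1).prodMk (hX 2))
  have hpair : P.map (fun ω => (X 1 ω, X 2 ω)) = μ.prod μ := by
    have h12 := hindep.indepFun (show (1 : Fin 3) ≠ 2 by decide)
    rw [(indepFun_iff_map_prod_eq_prod_map_map (hX 1).aemeasurable (hX 2).aemeasurable).mp h12,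
      hd 1, hd 2]
  have hmapP : P.map Φ = μ.prod (μ.prod μ) := by
    have h0 := (hindep.indepFun_prodMk hX 1 2 0 (by decide) (by decide)).symm
    rw [hΦdef]
    rw [(indepFun_iff_map_prod_eq_prod_map_map (hX 0).aemeasurable
      ((hX 1).prodMk (hX 2)).aemeasurable).mp h0, hd 0, hpair]
  -- a.e. membership in the ellipsoid
  have hae : ∀ i, ∀ᵐ ω ∂P, X i ω ∈ Ell a := by
    intro i
    rw [ae_iff]
    have hset : {ω | ¬ X i ω ∈ Ell a} = X i ⁻¹' (Ell a)ᶜ := rfl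
    rw [hset, ← Measure.map_apply (hX i) (ell_meas a).compl, hd i,
      happly _ (ell_meas a).compl, Set.compl_inter_self]
    simp
  -- the event is a.e. contained in Φ ⁻¹' K
  have hle : ∀ᵐ ω ∂P, ω ∈ {ω | 2 - ‖X 0 ω - X 1 ω‖ ≤ ε ∧ 2 - ‖X 0 ω - X 2 ω‖ ≤ ε} →
      ω ∈ Φ ⁻¹' K := by
    filter_upwards [hae 0, hae 1, hae 2] with ω h0 h1 h2 hEv
    obtain ⟨hE1, hE2⟩ := hEv
    have p1 := pair_facts ha ha1 hε hε1 h0 h1 hE1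
    have p2 := pair_facts ha ha1 hε hε1 h0 h2 hE2
    exact ⟨⟨h0, p1.1⟩, ⟨h1, p1.2.1, p1.2.2⟩, ⟨h2, p2.2.1, p2.2.2⟩⟩
  have hstep1 : P {ω | 2 - ‖X 0 ω - X 1 ω‖ ≤ ε ∧ 2 - ‖X 0 ω - X 2 ω‖ ≤ ε} ≤ P (Φ ⁻¹' K) :=
    measure_mono_ae hle
  have hstep2 : P (Φ ⁻¹' K) = (μ.prod (μ.prod μ)) K := by
    rw [← Measure.map_apply hΦ hKm, hmapP]
  -- bound μ(D x) uniformly on Sh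
  set M : ENNReal := V⁻¹ * ENNReal.ofReal (C₂ * (ε * ε)) with hM
  set N : ENNReal := V⁻¹ * ENNReal.ofReal (C₁ * (Real.sqrt ε * ε)) with hN
  have hDbound : ∀ x ∈ Sh, μ (D x) ≤ M := by
    intro x hx
    rw [hμ, happly _ (D_meas a ε x), Set.inter_eq_left.mpr (D_subset a ε x)]
    exact mul_le_mul_right (local_vol ha ha1 hB hL hε hεL hεs x hx.1 hx.2) _
  have hShBound : μ Sh ≤ N := by
    rw [hμ, happly _ (shell_meas a ε), Set.inter_eq_left.mpr (fun y (hy : y ∈ Sh) => hy.1)]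
    exact mul_le_mul_right (shell_vol ha ha1 hB hL hε hεL) _
  -- Tonelli
  have hstep3 : (μ.prod (μ.prod μ)) K ≤ M * M * N := by
    rw [Measure.prod_apply hKm]
    have hint : ∀ x, (μ.prod μ) (Prod.mk x ⁻¹' K) ≤ Sh.indicator (fun _ => M * M) x := by
      intro x
      by_cases hx : x ∈ Sh
      · rw [Set.indicator_of_mem hx]
        have hslice : Prod.mk x ⁻¹' K = (D x) ×ˢ (D x) := by
          ext q
          simp only [Set.mem_preimage, hK, Set.mem_setOf_eq, Set.mem_prod]
          exact ⟨fun h => h.2, fun h => ⟨⟨hx.1, hx.2⟩, h⟩⟩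
        rw [hslice, Measure.prod_prod]
        exact mul_le_mul' (hDbound x hx) (hDbound x hx)
      · rw [Set.indicator_of_notMem hx]
        have hslice : Prod.mk x ⁻¹' K = ∅ := by
          ext q
          simp only [Set.mem_preimage, hK, Set.mem_setOf_eq, Set.mem_empty_iff_false, iff_false]
          exact fun h => hx ⟨h.1.1, h.1.2⟩
        simp [hslice]
    calc ∫⁻ x, (μ.prod μ) (Prod.mk x ⁻¹' K) ∂μ ≤ ∫⁻ x, Sh.indicator (fun _ => M * M) x ∂μ :=
        lintegral_mono hint
      _ = (M * M) * μ Sh := lintegral_indicator_const (shell_meas a ε) _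
      _ ≤ (M * M) * N := mul_le_mul_right hShBound _
      _ = M * M * N := rfl
  -- final arithmetic
  have hVeq : V = ENNReal.ofReal v := (ENNReal.ofReal_toReal hVt.ne).symm
  have hVinv : V⁻¹ = ENNReal.ofReal v⁻¹ := by
    rw [hVeq, ← ENNReal.ofReal_inv_of_pos hv0]
  have hMr : M = ENNReal.ofReal (v⁻¹ * (C₂ * (ε * ε))) := by
    rw [hM, hVinv, ← ENNReal.ofReal_mul (by positivity)]
  have hNr : N = ENNReal.ofReal (v⁻¹ * (C₁ * (Real.sqrt ε * ε))) := by
    rw [hN, hVinv, ← ENNReal.ofReal_mul (by positivity)]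
  have hrpow : ε ^ ((11:ℝ)/2) = ε^(5:ℕ) * Real.sqrt ε := by
    rw [show (11:ℝ)/2 = (5:ℕ) + (1/2 : ℝ) by norm_num, Real.rpow_add hε,
      Real.rpow_natCast, Real.sqrt_eq_rpow]
  have hfinal : ENNReal.ofReal (v⁻¹ * (C₂ * (ε * ε))) * ENNReal.ofReal (v⁻¹ * (C₂ * (ε * ε))) *
      ENNReal.ofReal (v⁻¹ * (C₁ * (Real.sqrt ε * ε)))
      ≤ ENNReal.ofReal ((C₂ / v)^2 * (C₁ / v) * ε ^ ((11:ℝ)/2)) := by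
    rw [← ENNReal.ofReal_mul (by positivity), ← ENNReal.ofReal_mul (by positivity)]
    apply ENNReal.ofReal_le_ofReal
    rw [hrpow]
    apply le_of_eq
    field_simp
  calc P {ω | 2 - ‖X 0 ω - X 1 ω‖ ≤ ε ∧ 2 - ‖X 0 ω - X 2 ω‖ ≤ ε}
      ≤ P (Φ ⁻¹' K) := hstep1
    _ = (μ.prod (μ.prod μ)) K := hstep2
    _ ≤ M * M * N := hstep3
    _ ≤ ENNReal.ofReal ((C₂ / v)^2 * (C₁ / v) * ε ^ ((11:ℝ)/2)) := by
        rw [hMr, hNr]; exact hfinal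
end

section
/- Uniformly over points x in the ellipsoid E with radial defect δ(x) = 1 − (x₁² + x₂²) ≤ Cε, the conditional pair probability p_ε(x) = P(2 − ‖x − X₂‖ ≤ ε) satisfies p_ε(x) = O(ε²) as ε ↓ 0, where X₂ is uniform on E. -/
open Real MeasureTheory ENNReal

set_option maxHeartbeats 1000000

/-- The matrix of the (unnormalized) rotation adapted to `(p, q)`. -/
noncomputable def M3 (p q : ℝ) : Matrix (Fin 3) (Fin 3) ℝ := !![p, q, 0; -q, p, 0; 0, 0, 1]

/-- The associated linear map on Euclidean space. -/
noncomputable def L3 (p q : ℝ) : EuclideanSpace ℝ (Fin 3) →ₗ[ℝ] EuclideanSpace ℝ (Fin 3) :=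
  Matrix.toEuclideanLin (M3 p q)

lemma L3_det (p q : ℝ) : LinearMap.det (L3 p q) = p^2 + q^2 := by
  rw [L3, Matrix.toEuclideanLin_eq_toLin, LinearMap.det_toLin]
  simp [M3, Matrix.det_fin_three]; ring

lemma L3_apply (p q : ℝ) (y : EuclideanSpace ℝ (Fin 3)) :
    L3 p q y 0 = p * y 0 + q * y 1 ∧ L3 p q y 1 = -q * y 0 + p * y 1 ∧ L3 p q y 2 = y 2 := by
  refine ⟨?_, ?_, ?_⟩ <;>
  simp [L3, M3, Matrix.toEuclideanLin, Matrix.mulVec, dotProduct, Fin.sum_univ_three, Matrix.vecHead, Matrix.vecTail]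

/-- The key pointwise estimate, in coordinates. -/
lemma key (a C ε x0 x1 x2 y0 y1 y2 : ℝ) (ha : 0 < a) (ha1 : a ≤ 1) (hC : 0 < C)
    (hε : 0 < ε) (hε0 : ε ≤ 1/(16*(C+1)))
    (hx : x0^2+x1^2+x2^2/a^2 ≤ 1) (hy : y0^2+y1^2+y2^2/a^2 ≤ 1)
    (hd : 1 - (x0^2+x1^2) ≤ C*ε)
    (hip : x0*y0+x1*y1+x2*y2 ≤ -1+2*ε) :
    (-1 ≤ x0*y0+x1*y1 ∧ x0*y0+x1*y1 ≤ -1+(3*C+3)*ε) ∧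
      (x1*y0-x0*y1)^2 ≤ (6*C+6)*ε ∧ y2^2 ≤ a^2*((8*C+8)*ε) := by
  have ha2 : (0:ℝ) < a^2 := by positivity
  have ha21 : a^2 ≤ 1 := by nlinarith only [ha, ha1]
  have hx2a : x2^2 ≤ x2^2/a^2 := by
    rw [le_div_iff₀ ha2]
    nlinarith only [mul_nonneg (sq_nonneg x2) (show (0:ℝ) ≤ 1-a^2 by linarith)]
  have hy2a : y2^2 ≤ y2^2/a^2 := by
    rw [le_div_iff₀ ha2]
    nlinarith only [mul_nonneg (sq_nonneg y2) (show (0:ℝ) ≤ 1-a^2 by linarith)]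
  have hx2 : x2^2 ≤ C*ε := by linarith only [hx2a, hx, hd]
  have hs1 : x0^2+x1^2 ≤ 1 := by
    linarith only [hx, div_nonneg (sq_nonneg x2) ha2.le]
  have hσ1 : y0^2+y1^2 ≤ 1 := by
    linarith only [hy, div_nonneg (sq_nonneg y2) ha2.le]
  have hσ0 : (0:ℝ) ≤ y0^2+y1^2 := by positivity
  set d : ℝ := 1 - (y0^2+y1^2) with hd_def
  have hd0 : 0 ≤ d := by simp only [hd_def]; linarith only [hσ1]
  have hd1 : d ≤ 1 := by simp only [hd_def]; linarith only [hσ0]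
  have hy2d : y2^2 ≤ a^2*d := by
    have h1 : y2^2/a^2 ≤ d := by simp only [hd_def]; linarith only [hy]
    rw [div_le_iff₀ ha2] at h1; linarith only [h1]
  have hy2d' : y2^2 ≤ d := le_trans hy2a (by simp only [hd_def]; linarith only [hy])
  have habsx : |x2| ≤ √(C*ε) := by
    rw [← Real.sqrt_sq_eq_abs]; exact Real.sqrt_le_sqrt hx2
  have habsy : |y2| ≤ √d := by
    rw [← Real.sqrt_sq_eq_abs]; exact Real.sqrt_le_sqrt hy2d'
  have hP : x0*y0+x1*y1 ≤ -1+2*ε + √(C*ε)*√d := by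
    have h1 : -(x2*y2) ≤ |x2| * |y2| := by rw [← abs_mul]; exact neg_le_abs _
    have h2 : |x2| * |y2| ≤ √(C*ε)*√d :=
      mul_le_mul habsx habsy (abs_nonneg _) (Real.sqrt_nonneg _)
    linarith only [h1, h2, hip]
  have hCauchy : (x0*y0+x1*y1)^2 ≤ (x0^2+x1^2)*(y0^2+y1^2) := by
    nlinarith only [sq_nonneg (x0*y1 - x1*y0)]
  have hP2 : (x0*y0+x1*y1)^2 ≤ 1 - d := by
    simp only [hd_def]
    nlinarith only [hCauchy, mul_nonneg (show (0:ℝ) ≤ 1-(x0^2+x1^2) by linarith only [hs1]) hσ0]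
  have c1 : -1 ≤ x0*y0+x1*y1 := by
    nlinarith only [sq_nonneg (x0*y0+x1*y1+1), hP2, hd0]
  have hεs : ε ≤ 1/16 := by
    have h1 : 1/(16*(C+1)) ≤ 1/16 := by
      rw [div_le_div_iff₀ (by positivity) (by norm_num)]
      nlinarith only [hC.le]
    linarith only [h1, hε0]
  have hCε : C*ε ≤ 1/16 := by
    have h1 : C*ε ≤ C*(1/(16*(C+1))) := mul_le_mul_of_nonneg_left hε0 hC.le
    have h2 : C*(1/(16*(C+1))) ≤ 1/16 := by
      rw [mul_one_div, div_le_div_iff₀ (by positivity) (by norm_num)]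
      nlinarith only [hC.le]
    linarith only [h1, h2]
  have hsC : √(C*ε) ≤ 1/4 := by
    have h1 : √(C*ε) ≤ √(1/16) := Real.sqrt_le_sqrt hCε
    have h2 : √(1/16 : ℝ) = 1/4 := by
      rw [show (1/16:ℝ) = (1/4)^2 by norm_num, Real.sqrt_sq (by norm_num)]
    linarith only [h1, h2]
  have hsd0 : 0 ≤ √d := Real.sqrt_nonneg d
  have hsC0 : 0 ≤ √(C*ε) := Real.sqrt_nonneg _
  have hsqC : (√C)^2 = C := Real.sq_sqrt hC.le
  have hsqε : (√ε)^2 = ε := Real.sq_sqrt hε.le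
  have hsqd : (√d)^2 = d := Real.sq_sqrt hd0
  have hsC' : 0 ≤ √C := Real.sqrt_nonneg C
  have hsε' : 0 ≤ √ε := Real.sqrt_nonneg ε
  have hsd1 : √d ≤ 1 := by
    nlinarith only [hsqd, sq_nonneg (√d - 1), hd1]
  have hprod14 : √(C*ε)*√d ≤ 1/4 := by
    have h := mul_le_mul hsC hsd1 hsd0 (by norm_num : (0:ℝ) ≤ 1/4)
    linarith only [h]
  have ht0 : -1+2*ε + √(C*ε)*√d ≤ -(1/2) := by linarith only [hprod14, hεs]
  have hsq : (1 - 2*ε - √(C*ε)*√d)^2 ≤ (x0*y0+x1*y1)^2 := by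
    have h1 : 0 ≤ -(-1+2*ε+√(C*ε)*√d) := by linarith only [ht0]
    have h2 : -(-1+2*ε+√(C*ε)*√d) ≤ -(x0*y0+x1*y1) := by linarith only [hP]
    have h3 := mul_self_le_mul_self h1 h2
    nlinarith only [h3]
  have hq : d ≤ 4*ε + 2*(√(C*ε)*√d) := by
    nlinarith only [hsq, hP2, sq_nonneg (2*ε + √(C*ε)*√d)]
  have htd : √d ≤ 2*√ε + 2*√(C*ε) := by
    by_contra h'
    push_neg at h'
    have hεp : 0 < √ε := Real.sqrt_pos.mpr hε
    have htpos : 0 < √d := by linarith only [h', hεp, hsC0]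
    have k1 := mul_lt_mul_of_pos_right h' htpos
    have k2 := mul_lt_mul_of_pos_left h' (by positivity : (0:ℝ) < 2*√ε)
    nlinarith only [hq, hsqd, hsqε, mul_nonneg hsε' hsC0, k1, k2]
  have hsplit : √(C*ε) = √C * √ε := Real.sqrt_mul hC.le ε
  have hR : √d ≤ (2+2*√C)*√ε := by
    rw [hsplit] at htd
    nlinarith only [htd]
  have hdB : d ≤ (8*C+8)*ε := by
    have h1 := mul_self_le_mul_self hsd0 hR
    have h2 : ((2+2*√C)*√ε)*((2+2*√C)*√ε) = (2+2*√C)^2*ε := by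
      rw [show ((2+2*√C)*√ε)*((2+2*√C)*√ε) = (2+2*√C)^2*(√ε*√ε) by ring,
        Real.mul_self_sqrt hε.le]
    have h3 : d ≤ (2+2*√C)^2*ε := by nlinarith only [h1, h2, hsqd]
    have h4 : (2+2*√C)^2 ≤ 8*C+8 := by
      nlinarith only [sq_nonneg (√C-1), hsqC, hsC']
    have h5 := mul_le_mul_of_nonneg_right h4 hε.le
    linarith only [h3, h5]
  have c4 : y2^2 ≤ a^2*((8*C+8)*ε) := by
    have h1 := mul_le_mul_of_nonneg_left hdB (sq_nonneg a)
    linarith only [hy2d, h1]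
  have h8 : √d ≤ √(8*C+8) * √ε := by
    rw [← Real.sqrt_mul (by positivity)]; exact Real.sqrt_le_sqrt hdB
  have h9 : √C * √(8*C+8) ≤ 3*C+1 := by
    rw [← Real.sqrt_mul hC.le]
    have h1 : C*(8*C+8) ≤ (3*C+1)^2 := by nlinarith only [sq_nonneg (C-1), hC.le]
    calc √(C*(8*C+8)) ≤ √((3*C+1)^2) := Real.sqrt_le_sqrt h1
      _ = 3*C+1 := Real.sqrt_sq (by positivity)
  have h10 : √(C*ε)*√d ≤ (3*C+1)*ε := by
    rw [hsplit]
    calc √C*√ε*√d ≤ √C*√ε*(√(8*C+8)*√ε) := by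
          apply mul_le_mul_of_nonneg_left h8 (by positivity)
      _ = (√C*√(8*C+8))*(√ε*√ε) := by ring
      _ = (√C*√(8*C+8))*ε := by rw [Real.mul_self_sqrt hε.le]
      _ ≤ (3*C+1)*ε := mul_le_mul_of_nonneg_right h9 hε.le
  have c2 : x0*y0+x1*y1 ≤ -1+(3*C+3)*ε := by linarith only [hP, h10]
  have hk : (3*C+3)*ε ≤ 3/16 := by
    have h1 : (3*C+3)*ε ≤ (3*C+3)*(1/(16*(C+1))) :=
      mul_le_mul_of_nonneg_left hε0 (by positivity)
    have h2 : (3*C+3)*(1/(16*(C+1))) = 3/16 := by field_simp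
    linarith only [h1, h2]
  have c3 : (x1*y0-x0*y1)^2 ≤ (6*C+6)*ε := by
    have hQ : (x1*y0-x0*y1)^2 = (x0^2+x1^2)*(y0^2+y1^2) - (x0*y0+x1*y1)^2 := by ring
    have hk0' : (0:ℝ) ≤ 1 - (3*C+3)*ε := by linarith only [hk]
    have hP' : 1 - (3*C+3)*ε ≤ -(x0*y0+x1*y1) := by linarith only [c2]
    have hPsq := mul_self_le_mul_self hk0' hP'
    have hprod : (x0^2+x1^2)*(y0^2+y1^2) ≤ 1 := by
      nlinarith only [hs1, hσ1, hσ0,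
        mul_nonneg (show (0:ℝ) ≤ 1-(x0^2+x1^2) by linarith only [hs1]) hσ0]
    nlinarith only [hQ, hprod, hPsq, mul_nonneg (mul_nonneg
      (show (0:ℝ) ≤ 3*C+3 by linarith only [hC.le]) hε.le)
      (mul_nonneg (show (0:ℝ) ≤ 3*C+3 by linarith only [hC.le]) hε.le)]
  exact ⟨⟨c1, c2⟩, c3, c4⟩

/-- Uniformly over `x ∈ E` with radial defect `1 - (x₁² + x₂²) ≤ Cε`, the pair
probability `p_ε(x) = P(2 - ‖x - X₂‖ ≤ ε)` is `O(ε²)` as `ε ↓ 0`. -/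
theorem stmt17 (a C : ℝ) (ha : 0 < a) (ha1 : a < 1) (hC : 0 < C) :
    ∃ K > (0:ℝ), ∃ ε₀ > (0:ℝ), ∀ ε : ℝ, 0 < ε → ε < ε₀ →
      ∀ x ∈ Ell a, 1 - (x 0 ^ 2 + x 1 ^ 2) ≤ C * ε →
        unifE a {y | 2 - ‖x - y‖ ≤ ε} ≤ ENNReal.ofReal (K * ε ^ 2) := by
  have ha1' : a ≤ 1 := ha1.le
  have ha2 : (0:ℝ) < a^2 := by positivity
  have ha21 : a^2 ≤ 1 := by nlinarith only [ha, ha1']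
  set m : ℝ≥0∞ := volume (Metric.ball (0 : EuclideanSpace ℝ (Fin 3)) a) with hm_def
  have hm0 : 0 < m := Metric.measure_ball_pos volume 0 ha
  have hmt : m ≠ ⊤ := measure_ball_lt_top.ne
  have hmtR : 0 < m.toReal := ENNReal.toReal_pos hm0.ne' hmt
  -- the ball is inside the ellipsoid
  have hball : Metric.ball (0 : EuclideanSpace ℝ (Fin 3)) a ⊆ Ell a := by
    intro y hy
    have h1 : ‖y‖ < a := by simpa using hy
    have h2 : ‖y‖^2 < a^2 := by
      nlinarith only [h1, norm_nonneg y, ha.le]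
    have h3 : y 0^2 + y 1^2 + y 2^2 < a^2 := by
      have := EuclideanSpace.norm_eq y
      rw [this] at h2
      rw [Real.sq_sqrt (by positivity)] at h2
      simpa [Fin.sum_univ_three, sq_abs] using h2
    show y 0^2 + y 1^2 + y 2^2/a^2 ≤ 1
    have heq : y 0^2 + y 1^2 + y 2^2/a^2 = (a^2*(y 0^2 + y 1^2) + y 2^2)/a^2 := by
      field_simp
    rw [heq, div_le_one ha2]
    nlinarith only [h3, mul_nonneg (show (0:ℝ) ≤ 1-a^2 by linarith only [ha21])
      (show (0:ℝ) ≤ y 0^2 + y 1^2 by positivity)]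
  refine ⟨m.toReal⁻¹ * (8*a*(3*C+3)*(√(6*C+6)*√(8*C+8))), by positivity,
    1/(16*(C+1)), by positivity, ?_⟩
  intro ε hε hεlt x hx hxd
  have hε0 : ε ≤ 1/(16*(C+1)) := hεlt.le
  have hεs : ε ≤ 1/16 := by
    have h1 : 1/(16*(C+1)) ≤ 1/16 := by
      rw [div_le_div_iff₀ (by positivity) (by norm_num)]
      nlinarith only [hC.le]
    linarith only [h1, hε0]
  have hCε : C*ε ≤ 1/16 := by
    have h1 : C*ε ≤ C*(1/(16*(C+1))) := mul_le_mul_of_nonneg_left hε0 hC.le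
    have h2 : C*(1/(16*(C+1))) ≤ 1/16 := by
      rw [mul_one_div, div_le_div_iff₀ (by positivity) (by norm_num)]
      nlinarith only [hC.le]
    linarith only [h1, h2]
  have hs_half : 1/2 ≤ x 0^2 + x 1^2 := by linarith only [hxd, hCε]
  set k : ℝ := (3*C+3)*ε with hk_def
  set r1 : ℝ := √((6*C+6)*ε) with hr1_def
  set r2 : ℝ := a * √((8*C+8)*ε) with hr2_def
  have hr1_0 : 0 ≤ r1 := Real.sqrt_nonneg _
  have hr2_0 : 0 ≤ r2 := by positivity
  have hk0 : 0 ≤ k := by positivity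
  set lo : Fin 3 → ℝ := ![-1, -r1, -r2] with hlo_def
  set hi : Fin 3 → ℝ := ![-1+k, r1, r2] with hhi_def
  set Box : Set (EuclideanSpace ℝ (Fin 3)) :=
    (MeasurableEquiv.toLp 2 (Fin 3 → ℝ)).symm ⁻¹'
      (Set.univ.pi fun i => Set.Icc (lo i) (hi i)) with hBox_def
  set T : Set (EuclideanSpace ℝ (Fin 3)) := {y | 2 - ‖x - y‖ ≤ ε} with hT_def
  have hT_meas : MeasurableSet T := by
    apply measurableSet_le
    · exact (measurable_const.sub ((measurable_const.sub measurable_id).norm))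
    · exact measurable_const
  -- the subset relation
  have hsub : T ∩ Ell a ⊆ (L3 (x 0) (x 1)) ⁻¹' Box := by
    rintro y ⟨hyT, hyE⟩
    have hyT' : 2 - ‖x - y‖ ≤ ε := hyT
    have hxE : x 0^2 + x 1^2 + x 2^2/a^2 ≤ 1 := hx
    have hyE' : y 0^2 + y 1^2 + y 2^2/a^2 ≤ 1 := hyE
    -- derive the inner product bound
    have h2ε : 0 ≤ 2 - ε := by linarith only [hεs]
    have hnorm : 2 - ε ≤ ‖x - y‖ := by linarith only [hyT']
    have hsq : (2-ε)^2 ≤ (x 0 - y 0)^2 + (x 1 - y 1)^2 + (x 2 - y 2)^2 := by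
      have h0 := mul_self_le_mul_self h2ε hnorm
      have h1 : (2-ε)^2 ≤ ‖x - y‖^2 := by nlinarith only [h0]
      rw [EuclideanSpace.norm_eq, Real.sq_sqrt (by positivity)] at h1
      simpa [Fin.sum_univ_three, sq_abs] using h1
    have hx2a : x 2^2 ≤ x 2^2/a^2 := by
      rw [le_div_iff₀ ha2]
      nlinarith only [mul_nonneg (sq_nonneg (x 2)) (show (0:ℝ) ≤ 1-a^2 by linarith only [ha21])]
    have hy2a : y 2^2 ≤ y 2^2/a^2 := by
      rw [le_div_iff₀ ha2]
      nlinarith only [mul_nonneg (sq_nonneg (y 2)) (show (0:ℝ) ≤ 1-a^2 by linarith only [ha21])]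
    have hnx : x 0^2 + x 1^2 + x 2^2 ≤ 1 := by linarith only [hx2a, hxE]
    have hny : y 0^2 + y 1^2 + y 2^2 ≤ 1 := by linarith only [hy2a, hyE']
    have hip : x 0*y 0 + x 1*y 1 + x 2*y 2 ≤ -1+2*ε := by
      nlinarith only [hsq, hnx, hny, sq_nonneg ε]
    obtain ⟨⟨c1, c2⟩, c3, c4⟩ := key a C ε (x 0) (x 1) (x 2) (y 0) (y 1) (y 2)
      ha ha1' hC hε hε0 hxE hyE' hxd hip
    obtain ⟨hL0, hL1, hL2⟩ := L3_apply (x 0) (x 1) y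
    simp only [hBox_def, Set.mem_preimage, Set.mem_pi, Set.mem_univ, forall_true_left,
      MeasurableEquiv.toLp_symm_apply]
    intro i
    fin_cases i
    · simp only [Fin.zero_eta, Fin.mk_one, Fin.reduceFinMk, hlo_def, hhi_def,
        Matrix.cons_val_zero, Set.mem_Icc]
      rw [hL0]
      exact ⟨c1, c2⟩
    · simp only [Fin.zero_eta, Fin.mk_one, Fin.reduceFinMk, hlo_def, hhi_def,
        Matrix.cons_val_one, Matrix.head_cons, Matrix.cons_val_zero, Set.mem_Icc]
      rw [hL1]
      have habs : |(-(x 1) * y 0 + x 0 * y 1)| ≤ r1 := by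
        rw [← Real.sqrt_sq_eq_abs, hr1_def]
        apply Real.sqrt_le_sqrt
        nlinarith only [c3]
      rw [abs_le] at habs
      constructor <;> linarith only [habs.1, habs.2]
    · show (L3 (x 0) (x 1)) y 2 ∈ Set.Icc (-r2) r2
      rw [Set.mem_Icc, hL2]
      have habs : |y 2| ≤ r2 := by
        rw [← Real.sqrt_sq_eq_abs, hr2_def, ← Real.sqrt_sq ha.le,
          ← Real.sqrt_mul (by positivity)]
        apply Real.sqrt_le_sqrt
        nlinarith only [c4]
      rw [abs_le] at habs
      simp only [Matrix.cons_val_two, Matrix.tail_cons, Matrix.head_cons]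
      exact ⟨habs.1, habs.2⟩
  -- determinant
  have hdet : LinearMap.det (L3 (x 0) (x 1)) = x 0^2 + x 1^2 := L3_det (x 0) (x 1)
  have hdet_pos : 0 < LinearMap.det (L3 (x 0) (x 1)) := by
    rw [hdet]; linarith only [hs_half]
  have hdet_inv : |((LinearMap.det (L3 (x 0) (x 1)))⁻¹)| ≤ 2 := by
    rw [abs_of_pos (by positivity), hdet]
    calc (x 0^2 + x 1^2)⁻¹ ≤ ((1:ℝ)/2)⁻¹ :=
          inv_anti₀ (by norm_num) hs_half
      _ = 2 := by norm_num
  -- volume of the box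
  have hBox_vol : volume Box =
      ENNReal.ofReal k * (ENNReal.ofReal (2*r1) * ENNReal.ofReal (2*r2)) := by
    rw [hBox_def,
      (EuclideanSpace.volume_preserving_symm_measurableEquiv_toLp (Fin 3)).measure_preimage
        ((MeasurableSet.univ_pi fun i => measurableSet_Icc).nullMeasurableSet),
      volume_pi_pi, Fin.prod_univ_three]
    simp only [hlo_def, hhi_def, Matrix.cons_val_zero, Matrix.cons_val_one,
      Matrix.head_cons, Matrix.cons_val_two, Matrix.tail_cons, Real.volume_Icc]
    rw [show (-1+k) - (-1) = k by ring, show r1 - (-r1) = 2*r1 by ring,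
      show r2 - (-r2) = 2*r2 by ring, mul_assoc]
  -- main estimate
  have hmain : volume (T ∩ Ell a) ≤ ENNReal.ofReal 2 * volume Box := by
    calc volume (T ∩ Ell a) ≤ volume ((L3 (x 0) (x 1)) ⁻¹' Box) := measure_mono hsub
      _ = ENNReal.ofReal |((LinearMap.det (L3 (x 0) (x 1)))⁻¹)| * volume Box :=
          Measure.addHaar_preimage_linearMap volume hdet_pos.ne' Box
      _ ≤ ENNReal.ofReal 2 * volume Box :=
          mul_le_mul_left (ENNReal.ofReal_le_ofReal hdet_inv) _
  have hEll_inv : (volume (Ell a))⁻¹ ≤ m⁻¹ :=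
    ENNReal.inv_le_inv' (measure_mono hball)
  have hminv : m⁻¹ = ENNReal.ofReal (m.toReal⁻¹) := by
    rw [ENNReal.ofReal_inv_of_pos hmtR, ENNReal.ofReal_toReal hmt]
  -- real arithmetic for the final constant
  have hreal : 2 * (k * (2*r1 * (2*r2))) =
      (8*a*(3*C+3)*(√(6*C+6)*√(8*C+8))) * ε^2 := by
    have e1 : r1 = √(6*C+6)*√ε := by rw [hr1_def, Real.sqrt_mul (by positivity)]
    have e2 : r2 = a*(√(8*C+8)*√ε) := by rw [hr2_def, Real.sqrt_mul (by positivity)]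
    have e3 : √ε*√ε = ε := Real.mul_self_sqrt hε.le
    rw [e1, e2, hk_def]
    linear_combination (8*a*(3*C+3)*(√(6*C+6)*√(8*C+8))*ε) * e3
  calc unifE a T = (volume (Ell a))⁻¹ * volume (T ∩ Ell a) := by
        rw [unifE, Measure.smul_apply, Measure.restrict_apply hT_meas, smul_eq_mul]
    _ ≤ m⁻¹ * (ENNReal.ofReal 2 * volume Box) := mul_le_mul' hEll_inv hmain
    _ = m⁻¹ * ENNReal.ofReal (2 * (k * (2*r1 * (2*r2)))) := by
        rw [hBox_vol, ← ENNReal.ofReal_mul (by positivity),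
          ← ENNReal.ofReal_mul (by positivity), ← ENNReal.ofReal_mul (by norm_num)]
    _ = ENNReal.ofReal (m.toReal⁻¹) * ENNReal.ofReal ((8*a*(3*C+3)*(√(6*C+6)*√(8*C+8))) * ε^2) := by
        rw [hminv, hreal]
    _ = ENNReal.ofReal (m.toReal⁻¹ * (8*a*(3*C+3)*(√(6*C+6)*√(8*C+8))) * ε^2) := by
        rw [← ENNReal.ofReal_mul (by positivity)]
        congr 1
        ring
end
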